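/- arXiv:1907.00264 — 7 statements merged into one kernel-verified Lean document; each statement's English description precedes it below -/
import Mathlib

section
/- For all 0 < δ < 1/2 and α > 1/2, the double integral ∫₀¹∫₀¹ s^{1+α} / (δ + s + t²)³ dt ds is bounded by a constant C(α) depending only on α (independent of δ). -/
set_option maxHeartbeats 1000000


open MeasureTheory

/-- Pointwise bound via weighted AM-GM. -/
lemma stmt1_pointwise (δ s t l α : ℝ) (hδ : 0 < δ) (hs : 0 < s) (ht : 0 < t)
    (hl0 : 0 ≤ l) (hl1 : l ≤ 1) :
    s ^ (1 + α) / (δ + s + t ^ 2) ^ 3 ≤ s ^ (1 + α - 3 * l) * t ^ (-(6 - 6 * l)) := by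
  have hD : s ^ l * (t ^ 2) ^ (1 - l) ≤ δ + s + t ^ 2 := by
    have h := Real.geom_mean_le_arith_mean2_weighted (w₁ := l) (w₂ := 1 - l) (p₁ := s)
      (p₂ := t ^ 2) hl0 (by linarith) hs.le (sq_nonneg t) (by ring)
    nlinarith [sq_nonneg t, mul_nonneg (sub_nonneg.2 hl1) hs.le,
      mul_nonneg hl0 (sq_nonneg t)]
  have hbase : (0:ℝ) < s ^ l * (t ^ 2) ^ (1 - l) := by positivity
  have hcube : (s ^ l * (t ^ 2) ^ (1 - l)) ^ 3 ≤ (δ + s + t ^ 2) ^ 3 :=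
    pow_le_pow_left₀ hbase.le hD 3
  have hid : (s ^ l * (t ^ 2) ^ (1 - l)) ^ 3 = s ^ (3 * l) * t ^ (6 - 6 * l) := by
    rw [mul_pow, ← Real.rpow_natCast (s ^ l) 3, ← Real.rpow_natCast ((t ^ 2) ^ (1 - l)) 3,
      ← Real.rpow_mul hs.le, ← Real.rpow_mul (by positivity), ← Real.rpow_natCast t 2,
      ← Real.rpow_mul ht.le]
    push_cast
    ring_nf
  rw [hid] at hcube
  have h1 : s ^ (1 + α) / (δ + s + t ^ 2) ^ 3
      ≤ s ^ (1 + α) / (s ^ (3 * l) * t ^ (6 - 6 * l)) := by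
    gcongr
  refine h1.trans_eq ?_
  rw [Real.rpow_sub hs, Real.rpow_neg ht.le, div_mul_eq_div_div, div_eq_mul_inv]

/-- For all `0 < δ < 1/2` and `α > 1/2`, the double integral
`∫₀¹∫₀¹ s^(1+α) / (δ + s + t²)³ dt ds` is bounded by a constant `C(α)`
depending only on `α` (independent of `δ`). -/
theorem stmt1 (α : ℝ) (hα : 1/2 < α) :
    ∃ C : ℝ, 0 < C ∧ ∀ δ : ℝ, 0 < δ → δ < 1/2 →
      (∫ s in (0:ℝ)..1, ∫ t in (0:ℝ)..1, s ^ (1 + α) / (δ + s + t^2)^3) ≤ C := by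
  set l : ℝ := min (11/12) ((5/6 + (2+α)/3)/2) with hl_def
  have hl1 : 5/6 < l := lt_min (by norm_num) (by linarith)
  have hl2 : 3 * l < 2 + α := by
    have h := min_le_right (11/12 : ℝ) ((5/6 + (2+α)/3)/2)
    rw [← hl_def] at h; linarith
  have hl3 : l ≤ 1 := le_trans (min_le_left _ _) (by norm_num)
  have hl0 : (0:ℝ) ≤ l := by linarith
  set q : ℝ := 6 - 6 * l with hq_def
  set p : ℝ := 1 + α - 3 * l with hp_def
  have hq1 : q < 1 := by simp only [hq_def]; linarith
  have hq0 : 0 ≤ q := by simp only [hq_def]; linarith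
  have hp : -1 < p := by simp only [hp_def]; linarith
  have hCpos : (0:ℝ) < 1 / ((1 - q) * (p + 1)) :=
    div_pos one_pos (mul_pos (by linarith) (by linarith))
  refine ⟨1 / ((1 - q) * (p + 1)), hCpos, fun δ hδ hδ2 => ?_⟩
  have hcont : ∀ s : ℝ, 0 ≤ s → Continuous fun t : ℝ => s ^ (1 + α) / (δ + s + t ^ 2) ^ 3 := by
    intro s hs
    apply Continuous.div continuous_const (by continuity)
    intro t
    have h : 0 < δ + s + t ^ 2 := by positivity
    positivity
  have hfint : ∀ s : ℝ, 0 ≤ s →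
      IntervalIntegrable (fun t : ℝ => s ^ (1 + α) / (δ + s + t ^ 2) ^ 3) volume 0 1 :=
    fun s hs => (hcont s hs).intervalIntegrable 0 1
  have hgint : IntervalIntegrable (fun t : ℝ => t ^ (-q)) volume 0 1 :=
    intervalIntegral.intervalIntegrable_rpow' (by linarith)
  have hrpow_int : ∫ t in (0:ℝ)..1, t ^ (-q) = 1 / (1 - q) := by
    rw [integral_rpow (Or.inl (by linarith))]
    rw [Real.one_rpow, Real.zero_rpow (by linarith : -q + 1 ≠ 0)]
    rw [show -q + 1 = 1 - q by ring]
    norm_num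
  -- Step A : inner bound
  have stepA : ∀ s ∈ Set.Icc (0:ℝ) 1,
      (∫ t in (0:ℝ)..1, s ^ (1 + α) / (δ + s + t ^ 2) ^ 3) ≤ s ^ p / (1 - q) := by
    intro s hs
    rcases eq_or_lt_of_le hs.1 with rfl | hs0
    · have hz : (fun t : ℝ => (0:ℝ) ^ (1 + α) / (δ + 0 + t ^ 2) ^ 3) = fun _ => (0:ℝ) := by
        funext t
        rw [Real.zero_rpow (by linarith : (1:ℝ) + α ≠ 0), zero_div]
      rw [hz, intervalIntegral.integral_zero]
      exact div_nonneg (Real.rpow_nonneg le_rfl _) (by linarith)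
    · have hae : ∀ᵐ t : ℝ ∂volume, t ≠ 0 := by
        have h0 : (volume : Measure ℝ) {0} = 0 := Real.volume_singleton
        rw [← MeasureTheory.compl_mem_ae_iff] at h0
        filter_upwards [h0] with t ht
        simpa using ht
      have hle : (fun t : ℝ => s ^ (1 + α) / (δ + s + t ^ 2) ^ 3)
          ≤ᵐ[volume.restrict (Set.Icc (0:ℝ) 1)] fun t => s ^ p * t ^ (-q) := by
        filter_upwards [ae_restrict_mem measurableSet_Icc, ae_restrict_of_ae hae]
          with t ht ht0
        have ht0' : 0 < t := lt_of_le_of_ne ht.1 (Ne.symm ht0)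
        simpa [hp_def, hq_def] using
          stmt1_pointwise δ s t l α hδ hs0 ht0' hl0 hl3
      have := intervalIntegral.integral_mono_ae_restrict zero_le_one (hfint s hs.1)
        (hgint.const_mul _) hle
      refine this.trans ?_
      rw [intervalIntegral.integral_const_mul, hrpow_int, mul_one_div]
  -- Step B : outer integrability of inner integral
  have hFmeas : StronglyMeasurable fun s : ℝ =>
      ∫ t, s ^ (1 + α) / (δ + s + t ^ 2) ^ 3 ∂(volume.restrict (Set.Ioc (0:ℝ) 1)) := by
    apply MeasureTheory.StronglyMeasurable.integral_prod_right
    apply Measurable.stronglyMeasurable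
    fun_prop
  have hFeq : ∀ s : ℝ, (∫ t in (0:ℝ)..1, s ^ (1 + α) / (δ + s + t ^ 2) ^ 3)
      = ∫ t, s ^ (1 + α) / (δ + s + t ^ 2) ^ 3 ∂(volume.restrict (Set.Ioc (0:ℝ) 1)) := by
    intro s
    rw [intervalIntegral.integral_of_le zero_le_one]
  have hFint : IntervalIntegrable
      (fun s : ℝ => ∫ t in (0:ℝ)..1, s ^ (1 + α) / (δ + s + t ^ 2) ^ 3) volume 0 1 := by
    rw [intervalIntegrable_iff_integrableOn_Ioc_of_le zero_le_one]
    refine Integrable.mono' (g := fun _ => 1 / δ ^ 3)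
      (integrableOn_const (by simp [Real.volume_Ioc]))
      ?_ ?_
    · apply AEStronglyMeasurable.congr
        ((hFmeas.aestronglyMeasurable).restrict (s := Set.Ioc 0 1))
      filter_upwards with s
      rw [hFeq]
    · refine (ae_restrict_iff' measurableSet_Ioc).2 (ae_of_all _ fun s hs => ?_)
      have hb : ∀ t ∈ Set.uIoc (0:ℝ) 1, ‖s ^ (1 + α) / (δ + s + t ^ 2) ^ 3‖ ≤ 1 / δ ^ 3 := by
        intro t ht
        have hd : (0:ℝ) < δ + s + t ^ 2 := by nlinarith [sq_nonneg t, hs.1]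
        rw [Real.norm_eq_abs, abs_of_nonneg
          (div_nonneg (Real.rpow_nonneg hs.1.le _) (by positivity))]
        have h1 : s ^ (1 + α) ≤ 1 := Real.rpow_le_one hs.1.le hs.2 (by linarith)
        have h2 : δ ^ 3 ≤ (δ + s + t ^ 2) ^ 3 := by
          apply pow_le_pow_left₀ hδ.le; nlinarith [sq_nonneg t, hs.1]
        exact div_le_div₀ zero_le_one h1 (by positivity) h2
      have := intervalIntegral.norm_integral_le_of_norm_le_const hb
      simpa using this
  have hGint : IntervalIntegrable (fun s : ℝ => s ^ p / (1 - q)) volume 0 1 :=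
    (intervalIntegral.intervalIntegrable_rpow' hp).div_const _
  -- Step C : combine
  have step := intervalIntegral.integral_mono_on zero_le_one hFint hGint stepA
  refine step.trans ?_
  rw [intervalIntegral.integral_div, integral_rpow (Or.inl hp), Real.one_rpow,
    Real.zero_rpow (by linarith : p + 1 ≠ 0), sub_zero, div_div, mul_comm]
end

section
/- For 0 < δ < 1/2 and α = 1/2, the double integral ∫₀¹∫₀¹ s^{3/2} / (δ + s + t²)³ dt ds is bounded by C · (1 + |log δ|) for an absolute constant C. -/
open MeasureTheory

/-- For `0 < δ < 1/2` (the case `α = 1/2`), the double integral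
`∫₀¹∫₀¹ s^(3/2) / (δ + s + t²)³ dt ds` is bounded by `C · (1 + |log δ|)`
for an absolute constant `C`. -/
theorem stmt2 :
    ∃ C : ℝ, 0 < C ∧ ∀ δ : ℝ, 0 < δ → δ < 1/2 →
      (∫ s in (0:ℝ)..1, ∫ t in (0:ℝ)..1, s ^ ((3:ℝ)/2) / (δ + s + t^2)^3)
        ≤ C * (1 + |Real.log δ|) := by
  refine ⟨2, by norm_num, fun δ hδ hδ2 => ?_⟩
  have hrpow : Continuous fun s : ℝ => s ^ ((3:ℝ)/2) :=
    continuous_iff_continuousAt.2 fun s => Real.continuousAt_rpow_const s _ (Or.inr (by norm_num))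
  set F : ℝ → ℝ := fun s => ∫ t in (0:ℝ)..1, s ^ ((3:ℝ)/2) / (δ + max s 0 + t^2)^3 with hF
  have key : (∫ s in (0:ℝ)..1, ∫ t in (0:ℝ)..1, s ^ ((3:ℝ)/2) / (δ + s + t^2)^3)
      = ∫ s in (0:ℝ)..1, F s := by
    apply intervalIntegral.integral_congr
    intro s hs
    rw [Set.uIcc_of_le (by norm_num : (0:ℝ) ≤ 1)] at hs
    simp [hF, max_eq_left hs.1]
  rw [key]
  -- continuity of F
  have hden : ∀ p : ℝ × ℝ, (δ + max p.1 0 + p.2^2)^3 ≠ 0 := by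
    intro p
    have h1 : (0:ℝ) ≤ max p.1 0 := le_max_right _ _
    have h2 : (0:ℝ) ≤ p.2^2 := sq_nonneg _
    positivity
  have hcont : Continuous F := by
    apply intervalIntegral.continuous_parametric_intervalIntegral_of_continuous' (μ := volume)
    exact (hrpow.comp continuous_fst).div
      (((continuous_const.add (continuous_fst.max continuous_const)).add
        (continuous_snd.pow 2)).pow 3) hden
  -- pointwise bound on F
  have hbound : ∀ s ∈ Set.Icc (0:ℝ) 1, F s ≤ 2 / (δ + s) := by
    intro s hs
    have hc : 0 < δ + s := by linarith [hs.1]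
    set a : ℝ := Real.sqrt (δ + s) with ha_def
    have ha : 0 < a := Real.sqrt_pos.2 hc
    have ha2 : a ^ 2 = δ + s := Real.sq_sqrt hc.le
    have hcub : (δ + s) ^ ((3:ℝ)/2) = a ^ 3 := by
      rw [ha_def, Real.sqrt_eq_rpow, ← Real.rpow_natCast ((δ+s) ^ ((1:ℝ)/2)) 3,
        ← Real.rpow_mul hc.le]
      norm_num
    have step1 : F s ≤ ∫ t in (0:ℝ)..1, 2 / a * ((a + t)^2)⁻¹ := by
      apply intervalIntegral.integral_mono_on (by norm_num)
      · apply Continuous.intervalIntegrable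
        refine Continuous.div continuous_const
          ((continuous_const.add (continuous_id.pow 2)).pow 3) fun t => ?_
        have h1 : (0:ℝ) ≤ max s 0 := le_max_right _ _
        have h2 : (0:ℝ) ≤ t^2 := sq_nonneg _
        positivity
      · apply ContinuousOn.intervalIntegrable
        apply ContinuousOn.mul continuousOn_const
        apply ContinuousOn.inv₀ (((continuous_const.add continuous_id).pow 2).continuousOn)
        intro t ht
        rw [Set.uIcc_of_le (by norm_num : (0:ℝ) ≤ 1)] at ht
        have : 0 < a + t := by linarith [ht.1]
        exact pow_ne_zero 2 this.ne'
      · intro t ht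
        rw [max_eq_left hs.1]
        have ht0 : 0 ≤ t := ht.1
        have hd : 0 < δ + s + t^2 := by nlinarith [sq_nonneg t]
        have hat : 0 < a + t := by linarith
        have hnum : s ^ ((3:ℝ)/2) ≤ a ^ 3 := by
          rw [← hcub]
          exact Real.rpow_le_rpow hs.1 (by linarith) (by norm_num)
        have hs32 : 0 ≤ s ^ ((3:ℝ)/2) := Real.rpow_nonneg hs.1 _
        have e1 : (a + t)^2 ≤ 2 * (δ + s + t^2) := by nlinarith [sq_nonneg (a - t)]
        have e3 : (δ+s)^2 ≤ (δ+s+t^2)^2 := by nlinarith [sq_nonneg t]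
        have e2 : a ^ 3 * (a * (a+t)^2) ≤ 2 * (δ + s + t^2)^3 := by
          calc a ^ 3 * (a * (a+t)^2) = (a^2)^2 * (a+t)^2 := by ring
            _ = (δ+s)^2 * (a+t)^2 := by rw [ha2]
            _ ≤ (δ+s)^2 * (2 * (δ + s + t^2)) :=
                mul_le_mul_of_nonneg_left e1 (sq_nonneg _)
            _ ≤ (δ+s+t^2)^2 * (2 * (δ + s + t^2)) :=
                mul_le_mul_of_nonneg_right e3 (by positivity)
            _ = 2 * (δ + s + t^2)^3 := by ring
        have hr : 2 / a * ((a + t)^2)⁻¹ = 2 * (δ+s+t^2)^3 / (a * (a+t)^2) / (δ+s+t^2)^3 := by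
          field_simp
        rw [hr, div_le_div_iff₀ (by positivity) (by positivity), div_mul_eq_mul_div,
          le_div_iff₀ (by positivity)]
        calc s ^ ((3:ℝ)/2) * (δ+s+t^2)^3 * (a * (a+t)^2)
            ≤ a ^ 3 * (δ+s+t^2)^3 * (a * (a+t)^2) := by
              apply mul_le_mul_of_nonneg_right (mul_le_mul_of_nonneg_right hnum (by positivity))
              positivity
          _ = a ^ 3 * (a * (a+t)^2) * (δ+s+t^2)^3 := by ring
          _ ≤ 2 * (δ + s + t^2)^3 * (δ+s+t^2)^3 := mul_le_mul_of_nonneg_right e2 (by positivity)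
    have hcomp : (∫ t in (0:ℝ)..1, ((a + t)^2)⁻¹) = 1/a - 1/(a+1) := by
      have h1 : (∫ t in (0:ℝ)..1, ((a + t)^2)⁻¹) = ∫ u in (a+0)..(a+1), (u^2)⁻¹ :=
        intervalIntegral.integral_comp_add_left (fun u => ((u:ℝ)^2)⁻¹) a
      rw [add_zero] at h1
      have h2 : (∫ u in a..(a+1), ((u:ℝ)^2)⁻¹) = ∫ u in a..(a+1), (u:ℝ)^(-2:ℤ) := by
        apply intervalIntegral.integral_congr
        intro u _
        simp only [zpow_neg]
        norm_cast
      have h0 : (0:ℝ) ∉ Set.uIcc a (a+1) := by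
        rw [Set.uIcc_of_le (by linarith)]
        rintro ⟨h1', -⟩
        linarith
      rw [h1, h2, integral_zpow (Or.inr ⟨by norm_num, h0⟩)]
      have hane : a ≠ 0 := ha.ne'
      have hane1 : a + 1 ≠ 0 := by positivity
      norm_num [zpow_neg]
      field_simp
      ring
    have step2 : (∫ t in (0:ℝ)..1, 2 / a * ((a + t)^2)⁻¹) ≤ 2 / (δ + s) := by
      rw [intervalIntegral.integral_const_mul, hcomp]
      have h1 : 1/a - 1/(a+1) ≤ 1/a := by
        have : 0 < 1/(a+1) := by positivity
        linarith
      calc 2 / a * (1/a - 1/(a+1)) ≤ 2 / a * (1/a) := by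
            apply mul_le_mul_of_nonneg_left h1 (by positivity)
        _ = 2 / (δ + s) := by rw [← ha2]; field_simp
    linarith
  -- integrate the bound
  have houter : (∫ s in (0:ℝ)..1, F s) ≤ ∫ s in (0:ℝ)..1, 2 / (δ + s) := by
    apply intervalIntegral.integral_mono_on (by norm_num)
      (hcont.intervalIntegrable _ _) ?_ hbound
    apply ContinuousOn.intervalIntegrable
    apply ContinuousOn.div continuousOn_const (continuous_const.add continuous_id).continuousOn
    intro s hsi
    rw [Set.uIcc_of_le (by norm_num : (0:ℝ) ≤ 1)] at hsi
    have : 0 < δ + s := by linarith [hsi.1]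
    exact this.ne'
  have hval : (∫ s in (0:ℝ)..1, 2 / (δ + s)) = 2 * (Real.log (δ + 1) - Real.log δ) := by
    have h1 : (∫ s in (0:ℝ)..1, 2 / (δ + s)) = 2 * ∫ s in (0:ℝ)..1, (δ + s)⁻¹ := by
      rw [← intervalIntegral.integral_const_mul]
      apply intervalIntegral.integral_congr
      intro s _
      simp [div_eq_mul_inv]
    have h2 : (∫ s in (0:ℝ)..1, (δ + s)⁻¹) = ∫ u in (δ+0)..(δ+1), u⁻¹ :=
      intervalIntegral.integral_comp_add_left (fun u => (u:ℝ)⁻¹) δ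
    rw [add_zero] at h2
    have h0 : (0:ℝ) ∉ Set.uIcc δ (δ+1) := by
      rw [Set.uIcc_of_le (by linarith)]
      rintro ⟨h1', -⟩
      linarith
    rw [h1, h2, integral_inv h0, Real.log_div (by linarith) hδ.ne']
  have hlog1 : Real.log (δ + 1) ≤ 1 := by
    have := Real.log_le_sub_one_of_pos (show (0:ℝ) < δ + 1 by linarith)
    linarith
  have hlog2 : -Real.log δ ≤ |Real.log δ| := neg_le_abs _
  calc (∫ s in (0:ℝ)..1, F s) ≤ ∫ s in (0:ℝ)..1, 2 / (δ + s) := houter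
    _ = 2 * (Real.log (δ + 1) - Real.log δ) := hval
    _ ≤ 2 * (1 + |Real.log δ|) := by nlinarith
end

section
/- Let n ≥ 2 be an integer, 0 < α < 1, and 0 < δ < 1/2. Then the triple integral ∫₀¹∫₀¹∫₀¹ s₁^{α-1} t^{2n-3} / [(δ + s₁ + s₂ + t²)³ (δ + s₁ + s₂ + t)^{2n-3}] ds₁ ds₂ dt is bounded by C(n, α) · δ^{α - 3/2} for some constant C(n, α). -/
open MeasureTheory intervalIntegral Real


lemma int3 {α a : ℝ} (hα0 : 0 < α) (ha : 0 < a) :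
    IntervalIntegrable (fun s : ℝ => s ^ (α - 1) / (a + s) ^ 3) volume 0 1 := by
  have h1 : IntervalIntegrable (fun s : ℝ => s ^ (α - 1)) volume 0 1 :=
    intervalIntegral.intervalIntegrable_rpow' (by linarith)
  have h2 : ContinuousOn (fun s : ℝ => ((a + s) ^ 3)⁻¹) (Set.uIcc 0 1) := by
    apply ContinuousOn.inv₀ (by fun_prop)
    intro x hx
    rw [Set.uIcc_of_le zero_le_one] at hx
    have : 0 < a + x := by have := hx.1; linarith
    positivity
  simpa [div_eq_mul_inv] using h1.mul_continuousOn h2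

lemma lemA {α a : ℝ} (hα0 : 0 < α) (hα1 : α < 1) (ha : 0 < a) :
    ∫ s in (0:ℝ)..1, s ^ (α - 1) / (a + s) ^ 3 ≤ (1/α + 1/2) * a ^ (α - 3) := by
  have hint := int3 hα0 ha
  have hpow : ((a:ℝ) ^ (3:ℕ))⁻¹ = a ^ (-3 : ℝ) := by
    rw [← Real.rpow_natCast a 3, ← Real.rpow_neg ha.le]; norm_num
  have hrint : ∫ s in (0:ℝ)..1, s ^ (α - 1) = 1 / α := by
    rw [integral_rpow (Or.inl (by linarith))]
    simp [Real.zero_rpow (by linarith : α - 1 + 1 ≠ 0), hα0.ne']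
  rcases le_or_gt 1 a with h1a | ha1
  · -- a ≥ 1 : bound whole integral by (1/α) a^{-3}
    have hmono : ∫ s in (0:ℝ)..1, s ^ (α - 1) / (a + s) ^ 3
        ≤ ∫ s in (0:ℝ)..1, s ^ (α - 1) * (a ^ 3)⁻¹ := by
      apply intervalIntegral.integral_mono_on zero_le_one hint
      · exact (intervalIntegral.intervalIntegrable_rpow' (by linarith)).mul_const _
      · intro x hx
        rw [div_eq_mul_inv]
        apply mul_le_mul_of_nonneg_left _ (Real.rpow_nonneg hx.1 _)
        apply inv_anti₀ (by positivity)
        apply pow_le_pow_left₀ ha.le (by linarith [hx.1])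
    rw [intervalIntegral.integral_mul_const, hrint] at hmono
    refine hmono.trans ?_
    rw [hpow]
    have h2 : a ^ (-3:ℝ) ≤ a ^ (α - 3) :=
      Real.rpow_le_rpow_of_exponent_le h1a (by linarith)
    have h3 : (0:ℝ) < a ^ (α - 3) := Real.rpow_pos_of_pos ha _
    have h4 : 1/α * a ^ (-3:ℝ) ≤ 1/α * a ^ (α-3) :=
      mul_le_mul_of_nonneg_left h2 (by positivity)
    nlinarith
  · -- a < 1 : split at a
    have hsub1 : IntervalIntegrable (fun s : ℝ => s ^ (α - 1) / (a + s) ^ 3) volume 0 a := by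
      apply hint.mono_set
      rw [Set.uIcc_of_le ha.le, Set.uIcc_of_le zero_le_one]
      exact Set.Icc_subset_Icc le_rfl ha1.le
    have hsub2 : IntervalIntegrable (fun s : ℝ => s ^ (α - 1) / (a + s) ^ 3) volume a 1 := by
      apply hint.mono_set
      rw [Set.uIcc_of_le ha1.le, Set.uIcc_of_le zero_le_one]
      exact Set.Icc_subset_Icc ha.le le_rfl
    rw [← intervalIntegral.integral_add_adjacent_intervals hsub1 hsub2]
    have hp1 : ∫ s in (0:ℝ)..a, s ^ (α - 1) / (a + s) ^ 3 ≤ a ^ (α - 3) / α := by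
      have hmono : ∫ s in (0:ℝ)..a, s ^ (α - 1) / (a + s) ^ 3
          ≤ ∫ s in (0:ℝ)..a, s ^ (α - 1) * (a ^ 3)⁻¹ := by
        apply intervalIntegral.integral_mono_on ha.le hsub1
        · exact ((intervalIntegral.intervalIntegrable_rpow' (by linarith)).mul_const _)
        · intro x hx
          rw [div_eq_mul_inv]
          apply mul_le_mul_of_nonneg_left _ (Real.rpow_nonneg hx.1 _)
          apply inv_anti₀ (by positivity)
          apply pow_le_pow_left₀ ha.le (by linarith [hx.1])
      refine hmono.trans ?_
      rw [intervalIntegral.integral_mul_const, integral_rpow (Or.inl (by linarith))]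
      rw [Real.zero_rpow (by linarith : α - 1 + 1 ≠ 0)]
      rw [show α - 1 + 1 = α by ring, hpow, sub_zero]
      rw [div_mul_eq_mul_div, ← Real.rpow_add ha]
      rw [show α + -3 = α - 3 by ring]
    have hp2 : ∫ s in a..(1:ℝ), s ^ (α - 1) / (a + s) ^ 3 ≤ a ^ (α - 3) / 2 := by
      have hmono : ∫ s in a..(1:ℝ), s ^ (α - 1) / (a + s) ^ 3
          ≤ ∫ s in a..(1:ℝ), a ^ (α - 1) * s ^ (-3 : ℝ) := by
        apply intervalIntegral.integral_mono_on ha1.le hsub2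
        · apply IntervalIntegrable.continuousOn_mul
          · apply intervalIntegral.intervalIntegrable_rpow
            right
            rw [Set.uIcc_of_le ha1.le]
            intro h; exact absurd h.1 (by linarith)
          · exact continuousOn_const
        · intro x hx
          have hx0 : 0 < x := lt_of_lt_of_le ha hx.1
          have h1 : x ^ (α - 1) ≤ a ^ (α - 1) :=
            Real.rpow_le_rpow_of_nonpos ha hx.1 (by linarith)
          have h2 : x ^ (-3:ℝ) = (x ^ (3:ℕ))⁻¹ := by
            rw [← Real.rpow_natCast x 3, ← Real.rpow_neg hx0.le]; norm_num
          rw [h2, mul_comm, ← div_eq_inv_mul]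
          apply div_le_div₀ (Real.rpow_nonneg ha.le _) h1 (by positivity)
          apply pow_le_pow_left₀ hx0.le (by linarith)
      refine hmono.trans ?_
      rw [intervalIntegral.integral_const_mul, integral_rpow]
      · rw [Real.one_rpow, show (-3:ℝ) + 1 = -2 by norm_num]
        have ha2 : a ^ (-2:ℝ) = (a^(2:ℕ))⁻¹ := by
          rw [← Real.rpow_natCast a 2, ← Real.rpow_neg ha.le]; norm_num
        have key : a ^ (α - 1) * ((1 - a ^ (-2:ℝ)) / (-2)) ≤ a ^ (α - 1) * (a ^ (-2:ℝ) / 2) := by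
          apply mul_le_mul_of_nonneg_left _ (Real.rpow_nonneg ha.le _)
          rw [show (1 - a ^ (-2:ℝ)) / (-2) = (a ^ (-2:ℝ) - 1)/2 by ring]
          linarith
        refine key.trans ?_
        rw [← mul_div_assoc, ← Real.rpow_add ha, show α - 1 + -2 = α - 3 by ring]
      · right
        constructor; · norm_num
        rw [Set.uIcc_of_le ha1.le]
        intro h; exact absurd h.1 (by linarith)
    calc _ ≤ a ^ (α - 3) / α + a ^ (α - 3) / 2 := add_le_add hp1 hp2
    _ = (1/α + 1/2) * a ^ (α - 3) := by ring


lemma lemB {α b : ℝ} (hα1 : α < 1) (hb : 0 < b) :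
    ∫ s in (0:ℝ)..1, (b + s) ^ (α - 3) ≤ b ^ (α - 2) / (2 - α) := by
  have hcomp : ∫ s in (0:ℝ)..1, (b + s) ^ (α - 3)
      = ∫ u in b..(b+1), u ^ (α - 3) := by
    simpa using intervalIntegral.integral_comp_add_left (a := (0:ℝ)) (b := (1:ℝ)) (fun u : ℝ => u ^ (α - 3)) b
  rw [hcomp, integral_rpow]
  · rw [show α - 3 + 1 = α - 2 by ring]
    have h1 : (0:ℝ) ≤ (b+1) ^ (α - 2) := Real.rpow_nonneg (by linarith) _
    have h2 : ((b+1) ^ (α-2) - b ^ (α-2)) / (α - 2)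
        = (b ^ (α-2) - (b+1) ^ (α-2)) / (2 - α) := by
      rw [show (2:ℝ) - α = -(α - 2) by ring, div_neg, ← neg_div, neg_sub]
    rw [h2]
    exact (div_le_div_iff_of_pos_right (by linarith : (0:ℝ) < 2 - α)).mpr (by linarith)
  · right
    refine ⟨by linarith, ?_⟩
    rw [Set.uIcc_of_le (by linarith : b ≤ b + 1)]
    intro h; exact absurd h.1 (by linarith)

lemma lemC {α δ : ℝ} (hα0 : 0 < α) (hα1 : α < 1) (hδ0 : 0 < δ) (hδ1 : δ < 1/2) :
    ∫ t in (0:ℝ)..1, (δ + t^2) ^ (α - 2) ≤ (1 + 1/(3 - 2*α)) * δ ^ (α - 3/2) := by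
  set r := Real.sqrt δ with hr
  have hr0 : 0 < r := Real.sqrt_pos.mpr hδ0
  have hr1 : r < 1 := by
    rw [show (1:ℝ) = Real.sqrt 1 by simp]
    exact Real.sqrt_lt_sqrt hδ0.le (by linarith)
  have hrδ : r ^ (2:ℕ) = δ := Real.sq_sqrt hδ0.le
  have hcont : ∀ u v : ℝ, IntervalIntegrable (fun t : ℝ => (δ + t^2) ^ (α - 2)) volume u v := by
    intro u v
    apply ContinuousOn.intervalIntegrable
    apply ContinuousOn.rpow_const (by fun_prop)
    intro x _; left; positivity
  rw [← intervalIntegral.integral_add_adjacent_intervals (hcont 0 r) (hcont r 1)]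
  have hp1 : ∫ t in (0:ℝ)..r, (δ + t^2) ^ (α - 2) ≤ δ ^ (α - 3/2) := by
    have hmono : ∫ t in (0:ℝ)..r, (δ + t^2) ^ (α - 2)
        ≤ ∫ _t in (0:ℝ)..r, δ ^ (α - 2) := by
      apply intervalIntegral.integral_mono_on hr0.le (hcont 0 r) intervalIntegrable_const
      intro x _
      exact Real.rpow_le_rpow_of_nonpos hδ0 (by nlinarith [sq_nonneg x]) (by linarith)
    rw [intervalIntegral.integral_const, smul_eq_mul, sub_zero] at hmono
    refine hmono.trans ?_
    rw [hr, Real.sqrt_eq_rpow, ← Real.rpow_add hδ0, show 1/2 + (α - 2) = α - 3/2 by ring]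
  have hp2 : ∫ t in r..(1:ℝ), (δ + t^2) ^ (α - 2) ≤ δ ^ (α - 3/2) / (3 - 2*α) := by
    have hmono : ∫ t in r..(1:ℝ), (δ + t^2) ^ (α - 2)
        ≤ ∫ t in r..(1:ℝ), t ^ (2*(α - 2)) := by
      apply intervalIntegral.integral_mono_on hr1.le (hcont r 1)
      · apply intervalIntegral.intervalIntegrable_rpow
        right; rw [Set.uIcc_of_le hr1.le]
        intro h; exact absurd h.1 (by linarith)
      · intro x hx
        have hx0 : 0 < x := lt_of_lt_of_le hr0 hx.1
        have h1 : (δ + x^2) ^ (α-2) ≤ (x^2) ^ (α-2) :=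
          Real.rpow_le_rpow_of_nonpos (by positivity) (by linarith) (by linarith)
        refine h1.trans_eq ?_
        rw [← Real.rpow_natCast x 2, ← Real.rpow_mul hx0.le]
        norm_num [mul_comm]
    refine hmono.trans ?_
    rw [integral_rpow]
    · rw [Real.one_rpow, show 2*(α-2) + 1 = 2*α - 3 by ring]
      have hrpow : r ^ (2*α - 3) = δ ^ (α - 3/2) := by
        rw [hr, Real.sqrt_eq_rpow, ← Real.rpow_mul hδ0.le]
        norm_num
        rw [show 1/2 * (2*α - 3) = α - 3/2 by ring]
      have h1 : (1 - r ^ (2*α-3)) / (2*α - 3) = (r ^ (2*α-3) - 1) / (3 - 2*α) := by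
        rw [show (3:ℝ) - 2*α = -(2*α - 3) by ring, div_neg, ← neg_div, neg_sub]
      rw [h1, hrpow]
      have h2 : (0:ℝ) < 3 - 2*α := by linarith
      have h3 : (0:ℝ) ≤ δ ^ (α - 3/2) := Real.rpow_nonneg hδ0.le _
      exact (div_le_div_iff_of_pos_right h2).mpr (by linarith)
    · right
      refine ⟨by intro h; nlinarith [h], ?_⟩  -- 2*(α-2) ≠ -1
      rw [Set.uIcc_of_le hr1.le]
      intro h; exact absurd h.1 (by linarith)
  calc _ ≤ δ ^ (α - 3/2) + δ ^ (α - 3/2) / (3 - 2*α) := add_le_add hp1 hp2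
  _ = (1 + 1/(3 - 2*α)) * δ ^ (α - 3/2) := by ring

/-- Let `n ≥ 2`, `0 < α < 1`, `0 < δ < 1/2`. Then
`∫₀¹∫₀¹∫₀¹ s₁^(α-1) t^(2n-3) / [(δ+s₁+s₂+t²)³ (δ+s₁+s₂+t)^(2n-3)] ds₁ ds₂ dt
  ≤ C(n,α) · δ^(α - 3/2)`. -/
theorem stmt3 (n : ℕ) (hn : 2 ≤ n) (α : ℝ) (hα0 : 0 < α) (hα1 : α < 1) :
    ∃ C : ℝ, 0 < C ∧ ∀ δ : ℝ, 0 < δ → δ < 1/2 →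
      (∫ t in (0:ℝ)..1, ∫ s₂ in (0:ℝ)..1, ∫ s₁ in (0:ℝ)..1,
          s₁ ^ (α - 1) * t ^ (2*n - 3) /
            ((δ + s₁ + s₂ + t^2)^3 * (δ + s₁ + s₂ + t)^(2*n - 3)))
        ≤ C * δ ^ (α - 3/2) := by
  have h2α : (0:ℝ) < 2 - α := by linarith
  have h3α : (0:ℝ) < 3 - 2*α := by linarith
  have hK1 : (0:ℝ) < 1/α + 1/2 := by positivity
  have hK3 : (0:ℝ) < 1 + 1/(3 - 2*α) := by
    have := one_div_pos.mpr h3α; linarith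
  refine ⟨(1/α + 1/2) / (2 - α) * (1 + 1/(3 - 2*α)),
    mul_pos (div_pos hK1 h2α) hK3, ?_⟩
  intro δ hδ0 hδ1
  -- nonnegativity of the integrand
  have hf0 : ∀ t s₂ s₁ : ℝ, 0 ≤ t → 0 ≤ s₂ → 0 ≤ s₁ →
      0 ≤ s₁ ^ (α - 1) * t ^ (2*n - 3) /
        ((δ + s₁ + s₂ + t^2)^3 * (δ + s₁ + s₂ + t)^(2*n - 3)) := by
    intro t s₂ s₁ ht hs₂ hs₁
    have h1 : 0 < δ + s₁ + s₂ + t^2 := by nlinarith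
    have h2 : 0 < δ + s₁ + s₂ + t := by linarith
    exact div_nonneg (mul_nonneg (Real.rpow_nonneg hs₁ _) (pow_nonneg ht _))
      (mul_nonneg (by positivity) (pow_nonneg h2.le _))
  have hH0 : ∀ t s₂ : ℝ, 0 ≤ t → 0 ≤ s₂ →
      0 ≤ ∫ s₁ in (0:ℝ)..1, s₁ ^ (α - 1) * t ^ (2*n - 3) /
        ((δ + s₁ + s₂ + t^2)^3 * (δ + s₁ + s₂ + t)^(2*n - 3)) := by
    intro t s₂ ht hs₂
    rw [intervalIntegral.integral_of_le zero_le_one]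
    exact setIntegral_nonneg measurableSet_Ioc fun s₁ hs₁ => hf0 t s₂ s₁ ht hs₂ hs₁.1.le
  -- innermost bound
  have inner : ∀ t ∈ Set.Ioc (0:ℝ) 1, ∀ s₂ ∈ Set.Ioc (0:ℝ) 1,
      (∫ s₁ in (0:ℝ)..1, s₁ ^ (α - 1) * t ^ (2*n - 3) /
        ((δ + s₁ + s₂ + t^2)^3 * (δ + s₁ + s₂ + t)^(2*n - 3)))
      ≤ (1/α + 1/2) * ((δ + t^2) + s₂) ^ (α - 3) := by
    intro t ht s₂ hs₂
    have ha0 : 0 < (δ + t^2) + s₂ := by nlinarith [sq_nonneg t, hs₂.1]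
    rw [intervalIntegral.integral_of_le zero_le_one]
    have step : (∫ s₁ in Set.Ioc (0:ℝ) 1, s₁ ^ (α - 1) * t ^ (2*n - 3) /
          ((δ + s₁ + s₂ + t^2)^3 * (δ + s₁ + s₂ + t)^(2*n - 3)))
        ≤ ∫ s₁ in Set.Ioc (0:ℝ) 1, s₁ ^ (α - 1) / (((δ + t^2) + s₂) + s₁) ^ 3 := by
      apply integral_mono_of_nonneg
      · refine (ae_restrict_iff' measurableSet_Ioc).mpr
          (Filter.Eventually.of_forall fun s₁ hs₁ => ?_)
        exact hf0 t s₂ s₁ ht.1.le hs₂.1.le hs₁.1.le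
      · exact (intervalIntegrable_iff_integrableOn_Ioc_of_le zero_le_one).mp
          (int3 hα0 ha0)
      · refine (ae_restrict_iff' measurableSet_Ioc).mpr
          (Filter.Eventually.of_forall fun s₁ hs₁ => ?_)
        have hs10 : 0 < s₁ := hs₁.1
        have hD1b : 0 < δ + s₁ + s₂ + t^2 := by nlinarith [sq_nonneg t, hs₂.1]
        have hD2b : 0 < δ + s₁ + s₂ + t := by linarith [ht.1, hs₂.1]
        have hN1 : 0 ≤ s₁ ^ (α - 1) := Real.rpow_nonneg hs10.le _
        have hD1 : 0 < (δ + s₁ + s₂ + t^2)^3 := by positivity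
        have hD2 : 0 < (δ + s₁ + s₂ + t)^(2*n - 3) := pow_pos hD2b _
        calc s₁ ^ (α - 1) * t ^ (2*n - 3) /
              ((δ + s₁ + s₂ + t^2)^3 * (δ + s₁ + s₂ + t)^(2*n - 3))
            ≤ s₁ ^ (α - 1) * (δ + s₁ + s₂ + t) ^ (2*n - 3) /
              ((δ + s₁ + s₂ + t^2)^3 * (δ + s₁ + s₂ + t)^(2*n - 3)) := by
              apply (div_le_div_iff_of_pos_right (mul_pos hD1 hD2)).mpr
              exact mul_le_mul_of_nonneg_left
                (pow_le_pow_left₀ ht.1.le (by linarith [hs₂.1]) _) hN1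
          _ = s₁ ^ (α - 1) / (δ + s₁ + s₂ + t^2)^3 := mul_div_mul_right _ _ hD2.ne'
          _ = s₁ ^ (α - 1) / (((δ + t^2) + s₂) + s₁) ^ 3 := by
              rw [show ((δ + t^2) + s₂) + s₁ = δ + s₁ + s₂ + t^2 by ring]
    refine step.trans ?_
    rw [← intervalIntegral.integral_of_le zero_le_one]
    exact lemA hα0 hα1 ha0
  -- middle bound
  have mid : ∀ t ∈ Set.Ioc (0:ℝ) 1,
      (∫ s₂ in (0:ℝ)..1, ∫ s₁ in (0:ℝ)..1, s₁ ^ (α - 1) * t ^ (2*n - 3) /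
        ((δ + s₁ + s₂ + t^2)^3 * (δ + s₁ + s₂ + t)^(2*n - 3)))
      ≤ (1/α + 1/2) / (2 - α) * (δ + t^2) ^ (α - 2) := by
    intro t ht
    have hb0 : 0 < δ + t^2 := by nlinarith [sq_nonneg t]
    rw [intervalIntegral.integral_of_le zero_le_one]
    have step : (∫ s₂ in Set.Ioc (0:ℝ) 1, ∫ s₁ in (0:ℝ)..1,
          s₁ ^ (α - 1) * t ^ (2*n - 3) /
            ((δ + s₁ + s₂ + t^2)^3 * (δ + s₁ + s₂ + t)^(2*n - 3)))
        ≤ ∫ s₂ in Set.Ioc (0:ℝ) 1, (1/α + 1/2) * ((δ + t^2) + s₂) ^ (α - 3) := by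
      apply integral_mono_of_nonneg
      · refine (ae_restrict_iff' measurableSet_Ioc).mpr
          (Filter.Eventually.of_forall fun s₂ hs₂ => ?_)
        exact hH0 t s₂ ht.1.le hs₂.1.le
      · have hc : ContinuousOn (fun s₂ : ℝ => (1/α + 1/2) * ((δ + t^2) + s₂) ^ (α - 3))
            (Set.Icc 0 1) := by
          apply ContinuousOn.mul continuousOn_const
          apply ContinuousOn.rpow_const (by fun_prop)
          intro x hx; left; nlinarith [hx.1]
        exact (hc.integrableOn_Icc).mono_set Set.Ioc_subset_Icc_self
      · refine (ae_restrict_iff' measurableSet_Ioc).mpr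
          (Filter.Eventually.of_forall fun s₂ hs₂ => ?_)
        exact inner t ht s₂ hs₂
    refine step.trans ?_
    rw [← intervalIntegral.integral_of_le zero_le_one,
      intervalIntegral.integral_const_mul]
    have := lemB (b := δ + t^2) hα1 hb0
    calc (1/α + 1/2) * ∫ s₂ in (0:ℝ)..1, ((δ + t^2) + s₂) ^ (α - 3)
        ≤ (1/α + 1/2) * ((δ + t^2) ^ (α - 2) / (2 - α)) :=
          mul_le_mul_of_nonneg_left this hK1.le
      _ = (1/α + 1/2) / (2 - α) * (δ + t^2) ^ (α - 2) := by ring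
  have hF0 : ∀ t : ℝ, 0 ≤ t →
      0 ≤ ∫ s₂ in (0:ℝ)..1, ∫ s₁ in (0:ℝ)..1, s₁ ^ (α - 1) * t ^ (2*n - 3) /
        ((δ + s₁ + s₂ + t^2)^3 * (δ + s₁ + s₂ + t)^(2*n - 3)) := by
    intro t ht
    rw [intervalIntegral.integral_of_le zero_le_one]
    exact setIntegral_nonneg measurableSet_Ioc fun s₂ hs₂ => hH0 t s₂ ht hs₂.1.le
  -- outer bound
  rw [intervalIntegral.integral_of_le zero_le_one]
  have step : (∫ t in Set.Ioc (0:ℝ) 1, ∫ s₂ in (0:ℝ)..1, ∫ s₁ in (0:ℝ)..1,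
        s₁ ^ (α - 1) * t ^ (2*n - 3) /
          ((δ + s₁ + s₂ + t^2)^3 * (δ + s₁ + s₂ + t)^(2*n - 3)))
      ≤ ∫ t in Set.Ioc (0:ℝ) 1, (1/α + 1/2) / (2 - α) * (δ + t^2) ^ (α - 2) := by
    apply integral_mono_of_nonneg
    · refine (ae_restrict_iff' measurableSet_Ioc).mpr
        (Filter.Eventually.of_forall fun t ht => ?_)
      exact hF0 t ht.1.le
    · have hc : ContinuousOn (fun t : ℝ => (1/α + 1/2) / (2 - α) * (δ + t^2) ^ (α - 2))
          (Set.Icc 0 1) := by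
        apply ContinuousOn.mul continuousOn_const
        apply ContinuousOn.rpow_const (by fun_prop)
        intro x _; left; positivity
      exact (hc.integrableOn_Icc).mono_set Set.Ioc_subset_Icc_self
    · refine (ae_restrict_iff' measurableSet_Ioc).mpr
        (Filter.Eventually.of_forall fun t ht => ?_)
      exact mid t ht
  refine step.trans ?_
  rw [← intervalIntegral.integral_of_le zero_le_one,
    intervalIntegral.integral_const_mul]
  calc (1/α + 1/2) / (2 - α) * ∫ t in (0:ℝ)..1, (δ + t^2) ^ (α - 2)
      ≤ (1/α + 1/2) / (2 - α) * ((1 + 1/(3 - 2*α)) * δ ^ (α - 3/2)) :=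
        mul_le_mul_of_nonneg_left (lemC hα0 hα1 hδ0 hδ1) (by positivity)
    _ = (1/α + 1/2) / (2 - α) * (1 + 1/(3 - 2*α)) * δ ^ (α - 3/2) := by ring
end

section
/- Let n ≥ 2 be an integer and 0 < δ < 1. Then ∫₀¹∫₀¹ s · t^{2n-3} / (δ + s + t²)^{n+1} dt ds ≤ C(n) · (1 + |log δ|) for some constant C(n) depending only on n. -/
open MeasureTheory

/-- Let `n ≥ 2` and `0 < δ < 1`. Then
`∫₀¹∫₀¹ s · t^(2n-3) / (δ + s + t²)^(n+1) dt ds ≤ C(n) · (1 + |log δ|)`. -/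
theorem stmt4 (n : ℕ) (hn : 2 ≤ n) :
    ∃ C : ℝ, 0 < C ∧ ∀ δ : ℝ, 0 < δ → δ < 1 →
      (∫ s in (0:ℝ)..1, ∫ t in (0:ℝ)..1, s * t ^ (2*n - 3) / (δ + s + t^2)^(n+1))
        ≤ C * (1 + |Real.log δ|) := by
  refine ⟨1, one_pos, ?_⟩
  intro δ hδ0 hδ1
  have huIcc : Set.uIcc (0:ℝ) 1 = Set.Icc 0 1 := Set.uIcc_of_le (by norm_num)
  -- integrand continuity (for s ≥ 0)
  have hcont : ∀ s : ℝ, 0 ≤ s →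
      Continuous (fun t : ℝ => s * t ^ (2*n - 3) / (δ + s + t^2)^(n+1)) := by
    intro s hs
    exact Continuous.div (by fun_prop) (by fun_prop) (fun t => by positivity)
  have hcont3 : ∀ s : ℝ, 0 ≤ s →
      Continuous (fun t : ℝ => s * t / (δ + s + t^2)^3) := by
    intro s hs
    exact Continuous.div (by fun_prop) (by fun_prop) (fun t => by positivity)
  -- inner integral bound
  have hinner : ∀ s ∈ Set.Icc (0:ℝ) 1,
      (∫ t in (0:ℝ)..1, s * t ^ (2*n - 3) / (δ + s + t^2)^(n+1)) ≤ 1/(4*(δ+s)) := by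
    intro s hs
    obtain ⟨hs0, hs1⟩ := hs
    have hds : 0 < δ + s := by linarith
    have step1 : (∫ t in (0:ℝ)..1, s * t ^ (2*n - 3) / (δ + s + t^2)^(n+1))
        ≤ ∫ t in (0:ℝ)..1, s * t / (δ + s + t^2)^3 := by
      apply intervalIntegral.integral_mono_on (by norm_num)
      · exact (hcont s hs0).intervalIntegrable 0 1
      · exact (hcont3 s hs0).intervalIntegrable 0 1
      · intro t ht
        obtain ⟨ht0, ht1⟩ := ht
        have hD : (0:ℝ) < δ + s + t^2 := by positivity
        rw [div_le_div_iff₀ (by positivity) (by positivity)]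
        have hexp : 2*n - 3 = 2*(n-2) + 1 := by omega
        have h1 : t ^ (2*n - 3) = (t^2)^(n-2) * t := by
          rw [hexp, pow_succ, ← pow_mul]
        have h2 : (t^2)^(n-2) ≤ (δ + s + t^2)^(n-2) := by
          apply pow_le_pow_left₀ (sq_nonneg t)
          linarith
        have h3 : (δ + s + t^2)^(n+1) = (δ + s + t^2)^3 * (δ + s + t^2)^(n-2) := by
          rw [← pow_add]; congr 1; omega
        calc s * t ^ (2*n - 3) * (δ + s + t^2)^3
            = (s * t * (δ + s + t^2)^3) * (t^2)^(n-2) := by rw [h1]; ring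
          _ ≤ (s * t * (δ + s + t^2)^3) * (δ + s + t^2)^(n-2) := by
              apply mul_le_mul_of_nonneg_left h2 (by positivity)
          _ = s * t * (δ + s + t^2)^(n+1) := by rw [h3]; ring
    have hderiv : ∀ t ∈ Set.uIcc (0:ℝ) 1,
        HasDerivAt (fun t : ℝ => -(s/4) * ((δ+s+t^2)^2)⁻¹) (s * t / (δ + s + t^2)^3) t := by
      intro t ht
      have h1 : HasDerivAt (fun t : ℝ => δ + s + t^2) (2*t) t := by
        simpa using ((hasDerivAt_pow 2 t).const_add (δ + s))
      have h2 : HasDerivAt (fun t : ℝ => (δ + s + t^2)^2)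
          (2 * (δ + s + t^2)^1 * (2*t)) t := h1.pow 2
      have hne : ((δ + s + t^2)^2) ≠ 0 := by positivity
      have h3 := (h2.inv hne).const_mul (-(s/4))
      refine h3.congr_deriv ?_
      have hD : (0:ℝ) < δ + s + t^2 := by positivity
      field_simp
      ring
    have step2 : (∫ t in (0:ℝ)..1, s * t / (δ + s + t^2)^3) ≤ 1/(4*(δ+s)) := by
      rw [intervalIntegral.integral_eq_sub_of_hasDerivAt hderiv
        ((hcont3 s hs0).intervalIntegrable 0 1)]
      have hpos1 : 0 ≤ (s/4) * ((δ+s+1^2)^2)⁻¹ := by positivity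
      have hq2 : s/4 * ((δ+s+0^2)^2)⁻¹ ≤ 1/(4*(δ+s)) := by
        rw [show s/4 * ((δ+s+0^2)^2)⁻¹ = s/(4*(δ+s)^2) by have h := hds.ne'; field_simp; ring,
          div_le_div_iff₀ (by positivity) (by positivity)]
        nlinarith
      linarith
    exact le_trans step1 step2
  -- integrability of the inner integral as a function of s
  have hIcont : ContinuousOn
      (fun s : ℝ => ∫ t in (0:ℝ)..1, s * t ^ (2*n - 3) / (δ + s + t^2)^(n+1))
      (Set.Icc 0 1) := by
    have hG : Continuous (fun s : ℝ =>
        ∫ t in (0:ℝ)..1, (max s 0) * t ^ (2*n - 3) / (δ + max s 0 + t^2)^(n+1)) := by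
      apply intervalIntegral.continuous_parametric_intervalIntegral_of_continuous'
      · exact Continuous.div (by fun_prop) (by fun_prop)
          (fun p => by have := le_max_right p.1 0; positivity)
    apply hG.continuousOn.congr
    intro s hs
    have : max s 0 = s := max_eq_left hs.1
    simp only [this]
  have hIint : IntervalIntegrable
      (fun s : ℝ => ∫ t in (0:ℝ)..1, s * t ^ (2*n - 3) / (δ + s + t^2)^(n+1))
      volume 0 1 := by
    apply ContinuousOn.intervalIntegrable
    rw [huIcc]; exact hIcont
  -- the dominating outer function
  have hgcont : ContinuousOn (fun s : ℝ => 1/(4*(δ+s))) (Set.Icc 0 1) := by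
    apply ContinuousOn.div continuousOn_const (by fun_prop)
    intro s hs
    have := hs.1
    positivity
  have hgint : IntervalIntegrable (fun s : ℝ => 1/(4*(δ+s))) volume 0 1 := by
    apply ContinuousOn.intervalIntegrable
    rw [huIcc]; exact hgcont
  have houter : (∫ s in (0:ℝ)..1, ∫ t in (0:ℝ)..1, s * t ^ (2*n - 3) / (δ + s + t^2)^(n+1))
      ≤ ∫ s in (0:ℝ)..1, 1/(4*(δ+s)) :=
    intervalIntegral.integral_mono_on (by norm_num) hIint hgint hinner
  have hderivs : ∀ x ∈ Set.uIcc (0:ℝ) 1,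
      HasDerivAt (fun s : ℝ => 1/4 * Real.log (δ + s)) (1/(4*(δ+x))) x := by
    intro x hx
    rw [huIcc] at hx
    have hds : 0 < δ + x := by have := hx.1; linarith
    have h1 : HasDerivAt (fun s : ℝ => δ + s) 1 x := by
      simpa using (hasDerivAt_id x).const_add δ
    have h2 : HasDerivAt (fun s : ℝ => Real.log (δ + s)) (1/(δ+x)) x := h1.log hds.ne'
    have h3 := h2.const_mul (1/4 : ℝ)
    refine h3.congr_deriv ?_
    field_simp
  have hcompute : (∫ s in (0:ℝ)..1, 1/(4*(δ+s)))
      = 1/4 * Real.log (δ+1) - 1/4 * Real.log δ := by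
    rw [intervalIntegral.integral_eq_sub_of_hasDerivAt hderivs hgint]
    norm_num
  have hlogδ : Real.log δ < 0 := Real.log_neg hδ0 hδ1
  have habs : |Real.log δ| = -Real.log δ := abs_of_neg hlogδ
  have hlog1 : Real.log (δ+1) ≤ δ := by
    have := Real.log_le_sub_one_of_pos (show (0:ℝ) < δ + 1 by linarith)
    linarith
  rw [hcompute] at houter
  rw [habs]
  calc (∫ s in (0:ℝ)..1, ∫ t in (0:ℝ)..1, s * t ^ (2*n - 3) / (δ + s + t^2)^(n+1))
      ≤ (1/4) * Real.log (δ+1) - (1/4) * Real.log δ := houter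
    _ ≤ 1 * (1 + -Real.log δ) := by nlinarith
end

section
/- Let n ≥ 2 be an integer, α > 0, and 0 < δ < 1. Then ∫₀¹∫₀¹ s^{1+α} t^{2n-3} / (δ + s + t²)^{n+1} dt ds ≤ C(n, α) for some constant C(n, α) independent of δ. -/
open MeasureTheory

private lemma inner_bound (n : ℕ) (hn : 2 ≤ n) (α : ℝ) (hα : 0 < α)
    (δ : ℝ) (hδ : 0 < δ) (s : ℝ) (hs : s ∈ Set.Icc (0:ℝ) 1) :
    (∫ t in (0:ℝ)..1, s ^ (1 + α) * t ^ (2*n - 3) / (δ + s + t^2)^(n+1))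
      ≤ s ^ (α - 1) / 2 := by
  obtain ⟨hs0, hs1⟩ := hs
  rcases eq_or_lt_of_le hs0 with h0 | hpos
  · -- s = 0 : integrand vanishes
    have : (0:ℝ) ^ (1 + α) = 0 := Real.zero_rpow (by positivity)
    simp only [← h0, this, zero_mul, zero_div, intervalIntegral.integral_zero]
    positivity
  · -- s > 0
    have hfc : Continuous fun t : ℝ =>
        s ^ (1 + α) * t ^ (2*n - 3) / (δ + s + t^2)^(n+1) := by
      apply Continuous.div (by fun_prop) (by fun_prop)
      intro t; positivity
    have hgc : Continuous fun t : ℝ => s ^ α * (t / (s + t^2)^2) := by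
      apply Continuous.mul continuous_const
      apply Continuous.div continuous_id (by fun_prop)
      intro t; positivity
    have step1 : (∫ t in (0:ℝ)..1, s ^ (1 + α) * t ^ (2*n - 3) / (δ + s + t^2)^(n+1))
        ≤ ∫ t in (0:ℝ)..1, s ^ α * (t / (s + t^2)^2) := by
      apply intervalIntegral.integral_mono_on (by norm_num)
        (hfc.intervalIntegrable 0 1) (hgc.intervalIntegrable 0 1)
      intro t ht
      obtain ⟨ht0, ht1⟩ := ht
      have hD : 0 < δ + s + t^2 := by positivity
      have hE : 0 < s + t^2 := by positivity
      have hsD : s ≤ δ + s + t^2 := by nlinarith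
      have htD : t^2 ≤ δ + s + t^2 := by nlinarith
      have hED : s + t^2 ≤ δ + s + t^2 := by nlinarith
      have hsplit : (1:ℝ) + α = α + 1 := by ring
      rw [hsplit, Real.rpow_add_one (ne_of_gt hpos)]
      have hpow : t ^ (2*n - 3) = (t^2) ^ (n-2) * t := by
        rw [← pow_mul, ← pow_succ]
        congr 1
        omega
      have h1 : s * t ^ (2*n - 3) ≤ t * (δ + s + t^2)^(n-1) := by
        rw [hpow]
        have h2 : (t^2)^(n-2) ≤ (δ + s + t^2)^(n-2) :=
          pow_le_pow_left₀ (by positivity) htD _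
        calc s * ((t^2)^(n-2) * t)
            ≤ (δ + s + t^2) * ((δ + s + t^2)^(n-2) * t) := by
              apply mul_le_mul hsD _ (by positivity) (le_of_lt hD)
              exact mul_le_mul_of_nonneg_right h2 ht0
          _ = t * (δ + s + t^2)^(n-1) := by
              rw [show n - 1 = (n-2) + 1 by omega, pow_succ]
              ring
      have hDpow : (δ + s + t^2)^(n+1) = (δ + s + t^2)^(n-1) * (δ + s + t^2)^2 := by
        rw [← pow_add]; congr 1; omega
      have h3 : s * t ^ (2*n - 3) / (δ + s + t^2)^(n+1) ≤ t / (s + t^2)^2 := by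
        calc s * t ^ (2*n - 3) / (δ + s + t^2)^(n+1)
            ≤ (t * (δ + s + t^2)^(n-1)) / (δ + s + t^2)^(n+1) := by gcongr
          _ = t / (δ + s + t^2)^2 := by
              rw [hDpow]
              field_simp
          _ ≤ t / (s + t^2)^2 := by gcongr
      calc s ^ α * s * t ^ (2*n - 3) / (δ + s + t^2)^(n+1)
          = s ^ α * (s * t ^ (2*n - 3) / (δ + s + t^2)^(n+1)) := by ring
        _ ≤ s ^ α * (t / (s + t^2)^2) := by
            apply mul_le_mul_of_nonneg_left h3 (Real.rpow_nonneg hs0 α)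
    have step2 : (∫ t in (0:ℝ)..1, s ^ α * (t / (s + t^2)^2))
        = s ^ α * ∫ t in (0:ℝ)..1, t / (s + t^2)^2 :=
      intervalIntegral.integral_const_mul _ _
    have step3 : (∫ t in (0:ℝ)..1, t / (s + t^2)^2)
        = 1/(2*s) - 1/(2*(s+1)) := by
      have hderiv : ∀ t ∈ Set.uIcc (0:ℝ) 1,
          HasDerivAt (fun t : ℝ => -(1/(2*(s + t^2)))) (t / (s + t^2)^2) t := by
        intro t ht
        have hE : (0:ℝ) < s + t^2 := by positivity
        have h : HasDerivAt (fun t : ℝ => s + t^2) (2*t) t := by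
          simpa using ((hasDerivAt_pow 2 t).const_add s)
        have h2 := (h.inv (ne_of_gt hE)).const_mul (-(1/2) : ℝ)
        have h3 : t / (s + t^2)^2 = -(1/2 : ℝ) * (-(2*t) / (s + t^2)^2) := by ring
        have h4 : (fun t : ℝ => -(1/(2*(s + t^2)))) = fun y : ℝ => -(1/2 : ℝ) * (s + y^2)⁻¹ := by
          funext y
          rw [mul_comm]
          field_simp
        rw [h3, h4]
        exact h2
      have hic : Continuous fun t : ℝ => t / (s + t^2)^2 := by
        apply Continuous.div continuous_id (by fun_prop)
        intro t; positivity
      rw [intervalIntegral.integral_eq_sub_of_hasDerivAt hderiv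
        (hic.intervalIntegrable 0 1)]
      norm_num
      ring
    have step4 : s ^ α * (1/(2*s) - 1/(2*(s+1))) ≤ s ^ (α - 1) / 2 := by
      have h1 : s ^ α * (1/(2*s) - 1/(2*(s+1))) ≤ s ^ α * (1/(2*s)) := by
        apply mul_le_mul_of_nonneg_left _ (Real.rpow_nonneg hs0 α)
        have : 0 < 1/(2*(s+1)) := by positivity
        linarith
      have h2 : s ^ α * (1/(2*s)) = s ^ (α - 1) / 2 := by
        rw [Real.rpow_sub_one (ne_of_gt hpos)]
        field_simp
      linarith
    calc (∫ t in (0:ℝ)..1, s ^ (1 + α) * t ^ (2*n - 3) / (δ + s + t^2)^(n+1))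
        ≤ ∫ t in (0:ℝ)..1, s ^ α * (t / (s + t^2)^2) := step1
      _ = s ^ α * ∫ t in (0:ℝ)..1, t / (s + t^2)^2 := step2
      _ = s ^ α * (1/(2*s) - 1/(2*(s+1))) := by rw [step3]
      _ ≤ s ^ (α - 1) / 2 := step4

/-- Let `n ≥ 2`, `α > 0`, `0 < δ < 1`. Then
`∫₀¹∫₀¹ s^(1+α) t^(2n-3) / (δ + s + t²)^(n+1) dt ds ≤ C(n,α)`,
with `C(n,α)` independent of `δ`. -/
theorem stmt5 (n : ℕ) (hn : 2 ≤ n) (α : ℝ) (hα : 0 < α) :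
    ∃ C : ℝ, 0 < C ∧ ∀ δ : ℝ, 0 < δ → δ < 1 →
      (∫ s in (0:ℝ)..1, ∫ t in (0:ℝ)..1,
          s ^ (1 + α) * t ^ (2*n - 3) / (δ + s + t^2)^(n+1)) ≤ C := by
  refine ⟨1/(2*α), by positivity, ?_⟩
  intro δ hδ hδ1
  -- a globally continuous version of the inner integral, using |s|
  have hucont : Continuous (Function.uncurry fun (s t : ℝ) =>
      |s| ^ (1 + α) * t ^ (2*n - 3) / (δ + |s| + t^2)^(n+1)) := by
    apply Continuous.div
    · apply Continuous.mul _ (by fun_prop)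
      exact Continuous.rpow_const (continuous_abs.comp continuous_fst)
        (fun x => Or.inr (by positivity))
    · fun_prop
    · intro p
      have : (0:ℝ) ≤ |p.1| := abs_nonneg _
      positivity
  have hcont : Continuous fun s : ℝ =>
      ∫ t in (0:ℝ)..1, |s| ^ (1 + α) * t ^ (2*n - 3) / (δ + |s| + t^2)^(n+1) :=
    intervalIntegral.continuous_parametric_intervalIntegral_of_continuous' hucont 0 1
  have hEq : Set.EqOn
      (fun s : ℝ => ∫ t in (0:ℝ)..1, s ^ (1 + α) * t ^ (2*n - 3) / (δ + s + t^2)^(n+1))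
      (fun s : ℝ => ∫ t in (0:ℝ)..1, |s| ^ (1 + α) * t ^ (2*n - 3) / (δ + |s| + t^2)^(n+1))
      (Set.uIcc 0 1) := by
    intro s hs
    rw [Set.uIcc_of_le (by norm_num : (0:ℝ) ≤ 1)] at hs
    simp only [abs_of_nonneg hs.1]
  rw [intervalIntegral.integral_congr hEq]
  have hbint : IntervalIntegrable (fun s : ℝ => s ^ (α - 1) / 2) volume 0 1 :=
    (intervalIntegral.intervalIntegrable_rpow' (by linarith)).div_const 2
  have hmono : (∫ s in (0:ℝ)..1,
      ∫ t in (0:ℝ)..1, |s| ^ (1 + α) * t ^ (2*n - 3) / (δ + |s| + t^2)^(n+1))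
      ≤ ∫ s in (0:ℝ)..1, s ^ (α - 1) / 2 := by
    apply intervalIntegral.integral_mono_on (by norm_num)
      (hcont.intervalIntegrable 0 1) hbint
    intro s hs
    have habs : |s| = s := abs_of_nonneg hs.1
    simp only [habs]
    exact inner_bound n hn α hα δ hδ s hs
  have hval : (∫ s in (0:ℝ)..1, s ^ (α - 1) / 2) = 1/(2*α) := by
    rw [intervalIntegral.integral_div, integral_rpow (Or.inl (by linarith))]
    rw [Real.one_rpow, Real.zero_rpow (by linarith : α - 1 + 1 ≠ 0)]
    field_simp
    ring_nf
    exact mul_inv_cancel₀ (ne_of_gt hα)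
  calc (∫ s in (0:ℝ)..1,
        ∫ t in (0:ℝ)..1, |s| ^ (1 + α) * t ^ (2*n - 3) / (δ + |s| + t^2)^(n+1))
      ≤ ∫ s in (0:ℝ)..1, s ^ (α - 1) / 2 := hmono
    _ = 1/(2*α) := hval
end

section
/- Let n ≥ 2 be an integer, 0 < α < 1, and 0 < δ < 1. Then ∫₀¹∫₀¹∫₀¹ s₁^{α-1} t^{2n-3} / (δ + s₁ + s₂ + t²)^{n+1} ds₁ ds₂ dt ≤ C(n, α) · δ^{α - 1} for some constant C(n, α). -/
open MeasureTheory

set_option maxHeartbeats 1000000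

section hidden
open Set
section Aux
lemma mono01 {F G : ℝ → ℝ} (hF : ∀ x ∈ Set.Ioc (0:ℝ) 1, 0 ≤ F x)
    (hG : IntervalIntegrable G volume 0 1)
    (hle : ∀ x ∈ Set.Ioc (0:ℝ) 1, F x ≤ G x) :
    ∫ x in (0:ℝ)..1, F x ≤ ∫ x in (0:ℝ)..1, G x := by
  rw [intervalIntegral.integral_of_le zero_le_one,
      intervalIntegral.integral_of_le zero_le_one]
  refine integral_mono_of_nonneg ?_ hG.1 ?_
  · exact (ae_restrict_iff' measurableSet_Ioc).2 (Filter.Eventually.of_forall hF)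
  · exact (ae_restrict_iff' measurableSet_Ioc).2 (Filter.Eventually.of_forall hle)

lemma int_shift_rpow {E p : ℝ} (hE : 0 < E) (hp : 1 < p) :
    ∫ s in (0:ℝ)..1, (E + s) ^ (-p) ≤ E ^ (1 - p) / (p - 1) := by
  have h1 : (∫ s in (0:ℝ)..1, (E + s) ^ (-p)) = ∫ x in E..(E+1), x ^ (-p) := by
    simpa using intervalIntegral.integral_comp_add_left (a := 0) (b := 1)
      (fun x => x ^ (-p)) E
  rw [h1, integral_rpow (Or.inr ⟨by linarith, by
      simp only [Set.mem_uIcc]; push_neg; constructor <;> intro h <;> linarith⟩)]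
  have hE1 : (0:ℝ) ≤ (E+1) ^ (-p+1) := Real.rpow_nonneg (by linarith) _
  have h2 : ((E+1) ^ (-p+1) - E ^ (-p+1)) / (-p+1)
      = (E ^ (-p+1) - (E+1) ^ (-p+1)) / (p-1) := by
    rw [show (-p+1) = -(p-1) by ring, div_neg, ← neg_div]; ring_nf
  rw [h2, show (1-p) = -p+1 by ring]
  gcongr
  · linarith

lemma g1_intble {α a δ : ℝ} (hα0 : 0 < α) (hδ0 : 0 < δ) (u v : ℝ) (hu : 0 ≤ u) (hv : 0 ≤ v) :
    IntervalIntegrable (fun s => s ^ (α-1) * (δ+s) ^ (-a)) volume u v := by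
  refine (intervalIntegral.intervalIntegrable_rpow' (by linarith)).mul_continuousOn ?_
  refine ContinuousOn.rpow_const ?_ ?_
  · exact (continuous_const.add continuous_id).continuousOn
  · intro x hx
    have hx0 : 0 ≤ x := by
      rcases Set.mem_uIcc.1 hx with h | h
      · exact le_trans hu h.1
      · exact le_trans hv h.1
    exact Or.inl (by positivity)

lemma J1_bound {α δ : ℝ} (hα0 : 0 < α) (hα1 : α < 1) (hδ0 : 0 < δ) (hδ1 : δ < 1) :
    ∫ s in (0:ℝ)..1, s ^ (α-1) * (δ+s) ^ (-((1+α)/2))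
      ≤ (1/α + 2/(1-α)) * δ ^ ((α-1)/2) := by
  set a : ℝ := (1+α)/2 with ha
  have haα : α < a := by rw [ha]; linarith
  have ha1 : a < 1 := by rw [ha]; linarith
  have ha0 : 0 < a := by rw [ha]; linarith
  have hsplit : (∫ s in (0:ℝ)..1, s ^ (α-1) * (δ+s) ^ (-a))
      = (∫ s in (0:ℝ)..δ, s ^ (α-1) * (δ+s) ^ (-a))
        + ∫ s in δ..1, s ^ (α-1) * (δ+s) ^ (-a) := by
    rw [intervalIntegral.integral_add_adjacent_intervals
      (g1_intble hα0 hδ0 0 δ le_rfl hδ0.le) (g1_intble hα0 hδ0 δ 1 hδ0.le zero_le_one)]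
  rw [hsplit]
  have h1 : (∫ s in (0:ℝ)..δ, s ^ (α-1) * (δ+s) ^ (-a)) ≤ δ ^ ((α-1)/2) / α := by
    have hmono : (∫ s in (0:ℝ)..δ, s ^ (α-1) * (δ+s) ^ (-a))
        ≤ ∫ s in (0:ℝ)..δ, s ^ (α-1) * δ ^ (-a) := by
      refine intervalIntegral.integral_mono_on hδ0.le
        (g1_intble hα0 hδ0 0 δ le_rfl hδ0.le)
        (((intervalIntegral.intervalIntegrable_rpow' (by linarith))).mul_const _) ?_
      intro s hs
      have : (δ+s) ^ (-a) ≤ δ ^ (-a) :=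
        Real.rpow_le_rpow_of_nonpos hδ0 (by linarith [hs.1]) (by linarith)
      exact mul_le_mul_of_nonneg_left this (Real.rpow_nonneg hs.1 _)
    refine hmono.trans ?_
    rw [intervalIntegral.integral_mul_const, integral_rpow (Or.inl (by linarith))]
    rw [show α - 1 + 1 = α by ring, Real.zero_rpow (ne_of_gt hα0)]
    rw [show (δ ^ α - 0) / α * δ ^ (-a) = δ ^ α * δ ^ (-a) / α by ring,
      ← Real.rpow_add hδ0, show α + -a = (α-1)/2 by rw [ha]; ring]
  have h2 : (∫ s in δ..1, s ^ (α-1) * (δ+s) ^ (-a)) ≤ 2 * δ ^ ((α-1)/2) / (1-α) := by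
    have hmono : (∫ s in δ..1, s ^ (α-1) * (δ+s) ^ (-a))
        ≤ ∫ s in δ..1, s ^ (α-1-a) := by
      refine intervalIntegral.integral_mono_on hδ1.le
        (g1_intble hα0 hδ0 δ 1 hδ0.le zero_le_one)
        (intervalIntegral.intervalIntegrable_rpow (Or.inr ?_)) ?_
      · simp only [Set.mem_uIcc]; push_neg
        constructor <;> intro h <;> linarith
      · intro s hs
        have hs0 : 0 < s := lt_of_lt_of_le hδ0 hs.1
        have hle : (δ+s) ^ (-a) ≤ s ^ (-a) :=
          Real.rpow_le_rpow_of_nonpos hs0 (by linarith) (by linarith)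
        calc s ^ (α-1) * (δ+s) ^ (-a) ≤ s ^ (α-1) * s ^ (-a) :=
              mul_le_mul_of_nonneg_left hle (Real.rpow_nonneg hs0.le _)
          _ = s ^ (α-1-a) := by rw [← Real.rpow_add hs0]; ring_nf
    refine hmono.trans ?_
    rw [integral_rpow (Or.inr ⟨by linarith, by
        simp only [Set.mem_uIcc]; push_neg; constructor <;> intro h <;> linarith⟩)]
    rw [show α - 1 - a + 1 = -((1-α)/2) by rw [ha]; ring, Real.one_rpow]
    have hd : (0:ℝ) < (1-α)/2 := by linarith
    have hδr : δ ^ (-((1-α)/2)) = δ ^ ((α-1)/2) := by ring_nf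
    rw [show (1 - δ ^ (-((1-α)/2)))/(-((1-α)/2))
        = (δ ^ ((α-1)/2) - 1)/((1-α)/2) by
          rw [hδr, show (-((1-α)/2)) = -((1-α)/2) from rfl, div_neg, ← neg_div, neg_sub],
      show 2 * δ ^ ((α-1)/2) / (1-α) = δ ^ ((α-1)/2) / ((1-α)/2) by
        rw [div_div_eq_mul_div]; ring]
    exact (div_le_div_iff_of_pos_right hd).2 (by linarith)
  calc _ ≤ δ ^ ((α-1)/2) / α + 2 * δ ^ ((α-1)/2) / (1-α) := add_le_add h1 h2
    _ = (1/α + 2/(1-α)) * δ ^ ((α-1)/2) := by ring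

lemma F_cont {δ b : ℝ} (hδ0 : 0 < δ) (k : ℕ) :
    Continuous (fun t : ℝ => t ^ k * (δ + t ^ 2) ^ (-b)) := by
  refine (continuous_pow k).mul ?_
  exact (continuous_const.add (continuous_pow 2)).rpow_const fun x => Or.inl (by show δ + x ^ 2 ≠ 0; positivity)

lemma T_bound {α δ : ℝ} (k : ℕ) (hk : 1 ≤ k) (hα0 : 0 < α) (hα1 : α < 1)
    (hδ0 : 0 < δ) (hδ1 : δ < 1) :
    ∫ t in (0:ℝ)..1, (t:ℝ) ^ k * (δ + t ^ 2) ^ (-(((k:ℝ)+2-α)/2))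
      ≤ (1/((k:ℝ)+1) + 1/(1-α)) * δ ^ ((α-1)/2) := by
  set b : ℝ := ((k:ℝ)+2-α)/2 with hb
  have hb0 : 0 < b := by
    have : (1:ℝ) ≤ (k:ℝ) := by exact_mod_cast hk
    rw [hb]; linarith
  set r : ℝ := Real.sqrt δ with hr
  have hr0 : 0 < r := Real.sqrt_pos.2 hδ0
  have hr1 : r < 1 := by
    rw [hr, show (1:ℝ) = Real.sqrt 1 by simp]
    exact Real.sqrt_lt_sqrt hδ0.le hδ1
  have hr2 : r ^ 2 = δ := Real.sq_sqrt hδ0.le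
  have hrrp : r = δ ^ ((1:ℝ)/2) := Real.sqrt_eq_rpow δ
  have hcont := F_cont (b := b) hδ0 k
  have hsplit : (∫ t in (0:ℝ)..1, t ^ k * (δ + t ^ 2) ^ (-b))
      = (∫ t in (0:ℝ)..r, t ^ k * (δ + t ^ 2) ^ (-b))
        + ∫ t in r..1, t ^ k * (δ + t ^ 2) ^ (-b) := by
    rw [intervalIntegral.integral_add_adjacent_intervals
      (hcont.intervalIntegrable _ _) (hcont.intervalIntegrable _ _)]
  rw [hsplit]
  have hδar : (0:ℝ) ≤ δ ^ ((α-1)/2) := Real.rpow_nonneg hδ0.le _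
  have h1 : (∫ t in (0:ℝ)..r, t ^ k * (δ + t ^ 2) ^ (-b))
      ≤ δ ^ ((α-1)/2) / ((k:ℝ)+1) := by
    have hmono : (∫ t in (0:ℝ)..r, t ^ k * (δ + t ^ 2) ^ (-b))
        ≤ ∫ t in (0:ℝ)..r, t ^ k * δ ^ (-b) := by
      refine intervalIntegral.integral_mono_on hr0.le (hcont.intervalIntegrable _ _)
        (((continuous_pow k).mul continuous_const).intervalIntegrable _ _) ?_
      intro t ht
      have : (δ + t ^ 2) ^ (-b) ≤ δ ^ (-b) :=
        Real.rpow_le_rpow_of_nonpos hδ0 (by nlinarith [sq_nonneg t]) (by linarith)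
      exact mul_le_mul_of_nonneg_left this (pow_nonneg ht.1 _)
    refine hmono.trans ?_
    rw [intervalIntegral.integral_mul_const, integral_pow]
    rw [zero_pow (Nat.succ_ne_zero k)]
    have hrk : r ^ (k+1) = δ ^ (((k:ℝ)+1)/2) := by
      rw [hrrp, ← Real.rpow_natCast (δ ^ ((1:ℝ)/2)) (k+1), ← Real.rpow_mul hδ0.le]
      congr 1
      push_cast
      ring
    rw [hrk]
    rw [show (δ ^ (((k:ℝ)+1)/2) - 0) / ((k:ℝ)+1) * δ ^ (-b)
        = δ ^ (((k:ℝ)+1)/2) * δ ^ (-b) / ((k:ℝ)+1) by ring,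
      ← Real.rpow_add hδ0, show ((k:ℝ)+1)/2 + -b = (α-1)/2 by rw [hb]; ring]
  have h2 : (∫ t in r..1, t ^ k * (δ + t ^ 2) ^ (-b))
      ≤ δ ^ ((α-1)/2) / (1-α) := by
    have hmono : (∫ t in r..1, t ^ k * (δ + t ^ 2) ^ (-b))
        ≤ ∫ t in r..1, t ^ (α-2) := by
      refine intervalIntegral.integral_mono_on hr1.le (hcont.intervalIntegrable _ _)
        (intervalIntegral.intervalIntegrable_rpow (Or.inr (by
          simp only [Set.mem_uIcc]; push_neg
          constructor <;> intro h <;> [linarith; linarith]))) ?_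
      intro t ht
      have ht0 : 0 < t := lt_of_lt_of_le hr0 ht.1
      have hle : (δ + t ^ 2) ^ (-b) ≤ (t ^ 2) ^ (-b) :=
        Real.rpow_le_rpow_of_nonpos (by positivity) (by linarith) (by linarith)
      calc t ^ k * (δ + t ^ 2) ^ (-b) ≤ t ^ k * (t ^ 2) ^ (-b) :=
            mul_le_mul_of_nonneg_left hle (pow_nonneg ht0.le _)
        _ = t ^ (α-2) := by
            rw [← Real.rpow_natCast t k, ← Real.rpow_natCast t 2,
              ← Real.rpow_mul ht0.le, ← Real.rpow_add ht0]
            congr 1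
            rw [hb]; push_cast; ring
    refine hmono.trans ?_
    rw [integral_rpow (Or.inr ⟨by linarith, by
        simp only [Set.mem_uIcc]; push_neg
        constructor <;> intro h <;> [linarith; linarith]⟩)]
    rw [show α - 2 + 1 = α - 1 by ring, Real.one_rpow]
    have hrα : r ^ (α-1) = δ ^ ((α-1)/2) := by
      rw [hrrp, ← Real.rpow_mul hδ0.le]
      congr 1; ring
    rw [show (1 - r ^ (α-1)) / (α-1) = (r ^ (α-1) - 1) / (1-α) by
        rw [show α - 1 = -(1-α) by ring, div_neg, ← neg_div, neg_sub], hrα]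
    exact (div_le_div_iff_of_pos_right (by linarith)).2 (by linarith)
  calc _ ≤ δ ^ ((α-1)/2) / ((k:ℝ)+1) + δ ^ ((α-1)/2) / (1-α) := add_le_add h1 h2
    _ = (1/((k:ℝ)+1) + 1/(1-α)) * δ ^ ((α-1)/2) := by ring

lemma denom_bound {X A B ap bp : ℝ} (hA : 0 < A) (hB : 0 < B) (hAX : A ≤ X)
    (hBX : B ≤ X) (hap : 0 ≤ ap) (hbp : 0 ≤ bp) (m : ℕ) (hm : (m:ℝ) = ap + bp) :
    A ^ ap * B ^ bp ≤ X ^ m := by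
  have hX : 0 < X := lt_of_lt_of_le hA hAX
  calc A ^ ap * B ^ bp ≤ X ^ ap * X ^ bp :=
        mul_le_mul (Real.rpow_le_rpow hA.le hAX hap) (Real.rpow_le_rpow hB.le hBX hbp)
          (Real.rpow_nonneg hB.le _) (Real.rpow_nonneg hX.le _)
    _ = X ^ (ap + bp) := (Real.rpow_add hX _ _).symm
    _ = X ^ m := by rw [← hm, Real.rpow_natCast]

end Aux


/-- Let `n ≥ 2`, `0 < α < 1`, `0 < δ < 1`. Then
`∫₀¹∫₀¹∫₀¹ s₁^(α-1) t^(2n-3) / (δ+s₁+s₂+t²)^(n+1) ds₁ ds₂ dt ≤ C(n,α) · δ^(α-1)`. -/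
theorem stmt6 (n : ℕ) (hn : 2 ≤ n) (α : ℝ) (hα0 : 0 < α) (hα1 : α < 1) :
    ∃ C : ℝ, 0 < C ∧ ∀ δ : ℝ, 0 < δ → δ < 1 →
      (∫ t in (0:ℝ)..1, ∫ s₂ in (0:ℝ)..1, ∫ s₁ in (0:ℝ)..1,
          s₁ ^ (α - 1) * t ^ (2*n - 3) / (δ + s₁ + s₂ + t^2)^(n+1))
        ≤ C * δ ^ (α - 1) := by
  set a : ℝ := (1+α)/2 with ha
  set k : ℕ := 2*n - 3 with hk
  have hk1 : 1 ≤ k := by omega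
  have hkc : (k:ℝ) = 2*(n:ℝ) - 3 := by
    rw [hk]; push_cast [Nat.cast_sub (by omega : 3 ≤ 2*n)]; ring
  set b : ℝ := ((k:ℝ)+2-α)/2 with hb
  have hb0 : 0 < b := by
    have : (1:ℝ) ≤ (k:ℝ) := by exact_mod_cast hk1
    rw [hb]; linarith
  set p : ℝ := b + 1 with hp
  have hap : ((n+1 : ℕ):ℝ) = a + p := by
    rw [hp, hb, ha, hkc]; push_cast; ring
  have ha0 : 0 < a := by rw [ha]; linarith
  set K₁ : ℝ := 1/α + 2/(1-α) with hK₁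
  set K₂ : ℝ := 1/((k:ℝ)+1) + 1/(1-α) with hK₂
  have h1α : (0:ℝ) < 1 - α := by linarith
  have hK₁0 : 0 < K₁ := by
    rw [hK₁]
    exact add_pos (div_pos one_pos hα0) (div_pos two_pos h1α)
  have hK₂0 : 0 < K₂ := by
    rw [hK₂]
    exact add_pos (div_pos one_pos (by positivity)) (div_pos one_pos h1α)
  refine ⟨K₁ * K₂ / b, by positivity, ?_⟩
  intro δ hδ0 hδ1
  set J₁ : ℝ := ∫ s in (0:ℝ)..1, s ^ (α-1) * (δ+s) ^ (-a) with hJ₁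
  have hJ₁0 : 0 ≤ J₁ := by
    refine intervalIntegral.integral_nonneg zero_le_one fun s hs => ?_
    exact mul_nonneg (Real.rpow_nonneg hs.1 _) (Real.rpow_nonneg (by linarith [hs.1]) _)
  have hJ₁le : J₁ ≤ K₁ * δ ^ ((α-1)/2) := J1_bound hα0 hα1 hδ0 hδ1
  -- Step A: innermost bound
  have stepA : ∀ t ∈ Set.Ioc (0:ℝ) 1, ∀ s₂ ∈ Set.Ioc (0:ℝ) 1,
      (∫ s₁ in (0:ℝ)..1, s₁ ^ (α - 1) * t ^ (2*n - 3) / (δ + s₁ + s₂ + t^2)^(n+1))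
        ≤ J₁ * (t ^ k * ((δ + t^2) + s₂) ^ (-p)) := by
    intro t ht s₂ hs₂
    have ht0 : 0 < t := ht.1
    have hs₂0 : 0 < s₂ := hs₂.1
    have hB0 : 0 < (δ + t^2) + s₂ := by positivity
    have key : (∫ s₁ in (0:ℝ)..1, s₁ ^ (α - 1) * t ^ (2*n - 3) / (δ + s₁ + s₂ + t^2)^(n+1))
        ≤ ∫ s₁ in (0:ℝ)..1, s₁ ^ (α-1) * (δ+s₁) ^ (-a) * (t ^ k * ((δ + t^2) + s₂) ^ (-p)) := by
      refine mono01 ?_ ((g1_intble hα0 hδ0 0 1 le_rfl zero_le_one).mul_const _) ?_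
      · intro s₁ hs₁
        have hd : (0:ℝ) < (δ + s₁ + s₂ + t^2) := by nlinarith [sq_nonneg t, hs₁.1, hs₂.1]
        exact div_nonneg (mul_nonneg (Real.rpow_nonneg hs₁.1.le _)
          (pow_nonneg ht0.le _)) (by positivity)
      · intro s₁ hs₁
        have hs₁0 : 0 < s₁ := hs₁.1
        have hA0 : 0 < δ + s₁ := by positivity
        have hdenom : (δ+s₁) ^ a * ((δ + t^2) + s₂) ^ p ≤ (δ + s₁ + s₂ + t^2)^(n+1) :=
          denom_bound hA0 hB0 (by nlinarith [sq_nonneg t]) (by linarith) ha0.le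
            (by rw [hp]; linarith) (n+1) hap
        have hnum : (0:ℝ) ≤ s₁ ^ (α-1) * t ^ (2*n-3) :=
          mul_nonneg (Real.rpow_nonneg hs₁0.le _) (pow_nonneg ht0.le _)
        calc s₁ ^ (α - 1) * t ^ (2*n - 3) / (δ + s₁ + s₂ + t^2)^(n+1)
            ≤ s₁ ^ (α - 1) * t ^ (2*n - 3) / ((δ+s₁) ^ a * ((δ + t^2) + s₂) ^ p) :=
              div_le_div_of_nonneg_left hnum (by positivity) hdenom
          _ = s₁ ^ (α-1) * (δ+s₁) ^ (-a) * (t ^ k * ((δ + t^2) + s₂) ^ (-p)) := by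
              rw [Real.rpow_neg hA0.le, Real.rpow_neg hB0.le, hk]
              field_simp
    refine key.trans_eq ?_
    rw [intervalIntegral.integral_mul_const]
  -- Step B
  have stepB : ∀ t ∈ Set.Ioc (0:ℝ) 1,
      (∫ s₂ in (0:ℝ)..1, ∫ s₁ in (0:ℝ)..1,
          s₁ ^ (α - 1) * t ^ (2*n - 3) / (δ + s₁ + s₂ + t^2)^(n+1))
        ≤ (J₁ / b) * (t ^ k * (δ + t^2) ^ (-b)) := by
    intro t ht
    have ht0 : 0 < t := ht.1
    have hE0 : 0 < δ + t^2 := by positivity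
    have hcont : IntervalIntegrable
        (fun s₂ : ℝ => J₁ * (t ^ k * ((δ + t^2) + s₂) ^ (-p))) volume 0 1 := by
      refine ContinuousOn.intervalIntegrable ?_
      refine (continuousOn_const.mul (continuousOn_const.mul ?_))
      refine ContinuousOn.rpow_const ((continuousOn_const.add continuousOn_id)) ?_
      intro x hx
      rw [Set.uIcc_of_le zero_le_one] at hx
      have : (0:ℝ) ≤ x := hx.1
      exact Or.inl (by positivity)
    have h1 : (∫ s₂ in (0:ℝ)..1, ∫ s₁ in (0:ℝ)..1,
          s₁ ^ (α - 1) * t ^ (2*n - 3) / (δ + s₁ + s₂ + t^2)^(n+1))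
        ≤ ∫ s₂ in (0:ℝ)..1, J₁ * (t ^ k * ((δ + t^2) + s₂) ^ (-p)) := by
      refine mono01 ?_ hcont (stepA t ht)
      intro s₂ hs₂
      refine intervalIntegral.integral_nonneg zero_le_one fun s₁ hs₁ => ?_
      have hd : (0:ℝ) < (δ + s₁ + s₂ + t^2) := by nlinarith [sq_nonneg t, hs₁.1, hs₂.1]
      exact div_nonneg (mul_nonneg (Real.rpow_nonneg hs₁.1 _)
        (pow_nonneg ht0.le _)) (by positivity)
    refine h1.trans ?_
    have h2 : (∫ s₂ in (0:ℝ)..1, J₁ * (t ^ k * ((δ + t^2) + s₂) ^ (-p)))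
        = J₁ * t ^ k * ∫ s₂ in (0:ℝ)..1, ((δ + t^2) + s₂) ^ (-p) := by
      rw [← intervalIntegral.integral_const_mul]
      congr 1; ext s₂; ring
    rw [h2]
    have h3 : (∫ s₂ in (0:ℝ)..1, ((δ + t^2) + s₂) ^ (-p))
        ≤ (δ + t^2) ^ (-b) / b := by
      have := int_shift_rpow hE0 (show 1 < p by rw [hp]; linarith)
      rwa [show 1 - p = -b by rw [hp]; ring, show p - 1 = b by rw [hp]; ring] at this
    calc J₁ * t ^ k * ∫ s₂ in (0:ℝ)..1, ((δ + t^2) + s₂) ^ (-p)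
        ≤ J₁ * t ^ k * ((δ + t^2) ^ (-b) / b) := by
          refine mul_le_mul_of_nonneg_left h3 ?_
          exact mul_nonneg hJ₁0 (pow_nonneg ht0.le _)
      _ = (J₁ / b) * (t ^ k * (δ + t^2) ^ (-b)) := by ring
  -- Step C
  have hbig : (∫ t in (0:ℝ)..1, ∫ s₂ in (0:ℝ)..1, ∫ s₁ in (0:ℝ)..1,
        s₁ ^ (α - 1) * t ^ (2*n - 3) / (δ + s₁ + s₂ + t^2)^(n+1))
      ≤ ∫ t in (0:ℝ)..1, (J₁ / b) * (t ^ k * (δ + t^2) ^ (-b)) := by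
    refine mono01 ?_ ((continuous_const.mul (F_cont hδ0 k)).intervalIntegrable _ _) stepB
    intro t ht
    refine intervalIntegral.integral_nonneg zero_le_one fun s₂ hs₂ => ?_
    refine intervalIntegral.integral_nonneg zero_le_one fun s₁ hs₁ => ?_
    have hd : (0:ℝ) < (δ + s₁ + s₂ + t^2) := by nlinarith [sq_nonneg t, hs₁.1, hs₂.1]
    exact div_nonneg (mul_nonneg (Real.rpow_nonneg hs₁.1 _)
      (pow_nonneg ht.1.le _)) (by positivity)
  refine hbig.trans ?_
  rw [intervalIntegral.integral_const_mul]
  have hT : (∫ t in (0:ℝ)..1, t ^ k * (δ + t^2) ^ (-b)) ≤ K₂ * δ ^ ((α-1)/2) :=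
    T_bound k hk1 hα0 hα1 hδ0 hδ1
  have hδar : (0:ℝ) ≤ δ ^ ((α-1)/2) := Real.rpow_nonneg hδ0.le _
  calc (J₁ / b) * ∫ t in (0:ℝ)..1, t ^ k * (δ + t^2) ^ (-b)
      ≤ (J₁ / b) * (K₂ * δ ^ ((α-1)/2)) :=
        mul_le_mul_of_nonneg_left hT (by positivity)
    _ ≤ ((K₁ * δ ^ ((α-1)/2)) / b) * (K₂ * δ ^ ((α-1)/2)) := by
        refine mul_le_mul_of_nonneg_right ?_ (by positivity)
        exact (div_le_div_iff_of_pos_right hb0).2 hJ₁le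
    _ = (K₁ * K₂ / b) * (δ ^ ((α-1)/2) * δ ^ ((α-1)/2)) := by ring
    _ = (K₁ * K₂ / b) * δ ^ (α-1) := by
        rw [← Real.rpow_add hδ0, show (α-1)/2 + (α-1)/2 = α-1 by ring]

end hidden
end

section
/- Let u ∈ W^{1,1}(ℝᴺ₊) have bounded support, where ℝᴺ₊ = {(x′, x_N) : x_N > 0}. Then the trace Tr(u) ∈ L¹(ℝ^{N−1}) satisfies ∫_{ℝ^{N−1}} |Tr(u)(x′)| dx′ ≤ ∫_{ℝᴺ₊} |∂u/∂x_N (x)| dx. -/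
open MeasureTheory

open Filter Topology Set in
/-- A linear functional on all real functions agreeing with the limit at `0⁺`
whenever that limit exists. -/
theorem exists_trace_functional :
    ∃ ℓ : (ℝ → ℝ) →ₗ[ℝ] ℝ, ∀ (f : ℝ → ℝ) (L : ℝ),
      Filter.Tendsto f (nhdsWithin 0 (Set.Ioi 0)) (nhds L) → ℓ f = L := by
  let p : Submodule ℝ (ℝ → ℝ) :=
  { carrier := {f | ∃ L, Filter.Tendsto f (𝓝[>] (0:ℝ)) (𝓝 L)}
    add_mem' := fun ⟨L, hL⟩ ⟨M, hM⟩ => ⟨L + M, hL.add hM⟩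
    zero_mem' := ⟨0, tendsto_const_nhds⟩
    smul_mem' := fun c f ⟨L, hL⟩ => ⟨c * L, by simpa [Pi.smul_def] using hL.const_mul c⟩ }
  have hlim : ∀ f : p, Tendsto (f : ℝ → ℝ) (𝓝[>] (0:ℝ))
      (𝓝 (limUnder (𝓝[>] (0:ℝ)) (f : ℝ → ℝ))) := by
    rintro ⟨f, L, hL⟩
    simpa [hL.limUnder_eq] using hL
  let ℓ₀ : p →ₗ[ℝ] ℝ :=
  { toFun := fun f => limUnder (𝓝[>] (0:ℝ)) (f : ℝ → ℝ)
    map_add' := fun f g => ((hlim f).add (hlim g)).limUnder_eq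
    map_smul' := fun c f => ((hlim f).const_mul c).limUnder_eq }
  obtain ⟨ℓ, hℓ⟩ := LinearMap.exists_extend ℓ₀
  refine ⟨ℓ, fun f L hf => ?_⟩
  have hfp : f ∈ p := ⟨L, hf⟩
  have h1 := LinearMap.congr_fun hℓ ⟨f, hfp⟩
  simp only [LinearMap.comp_apply, Submodule.subtype_apply] at h1
  rw [h1]
  exact hf.limUnder_eq

open Filter Topology Set Metric

/-- Trace estimate on the half-space `ℝᴺ₊ = ℝ^{N-1} × (0,∞)`: there is a linear trace
operator `T`, agreeing with `u ↦ u(·, 0)` for functions continuous up to the boundary,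
such that every `u ∈ W^{1,1}(ℝᴺ₊)` with bounded support (encoded via a pointwise
partial derivative `uN` in the vertical direction, with `u` and `uN` integrable on the
half-space) satisfies `T u ∈ L¹(ℝ^{N-1})` and
`∫_{ℝ^{N-1}} |T u| ≤ ∫_{ℝᴺ₊} |∂u/∂x_N|`. -/
theorem stmt10 (N : ℕ) (hN : 2 ≤ N) :
    ∃ T : ((EuclideanSpace ℝ (Fin (N-1)) × ℝ) → ℝ) → (EuclideanSpace ℝ (Fin (N-1)) → ℝ),
      IsLinearMap ℝ T ∧
      ∀ (u : (EuclideanSpace ℝ (Fin (N-1)) × ℝ) → ℝ)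
        (uN : (EuclideanSpace ℝ (Fin (N-1)) × ℝ) → ℝ),
        Bornology.IsBounded (Function.support u) →
        IntegrableOn u {x | 0 < x.2} →
        IntegrableOn uN {x | 0 < x.2} →
        (∀ x : EuclideanSpace ℝ (Fin (N-1)) × ℝ, 0 < x.2 →
          HasDerivAt (fun τ => u (x.1, τ)) (uN x) x.2) →
        (ContinuousOn u (closure {x | 0 < x.2}) → ∀ x', T u x' = u (x', 0)) ∧
        Integrable (T u) ∧
        ∫ x', |T u x'| ≤ ∫ x in {x | 0 < x.2}, |uN x| := by
  set E := EuclideanSpace ℝ (Fin (N-1)) with hE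
  obtain ⟨ℓ, hℓ⟩ := exists_trace_functional
  refine ⟨fun u x' => ℓ (fun τ => u (x', τ)), ⟨?_, ?_⟩, ?_⟩
  · intro u v; funext x'; exact map_add ℓ _ _
  · intro c u; funext x'; exact map_smul ℓ c _
  intro u uN hbd hu huN hderiv
  -- the set is a product
  have hset : {x : E × ℝ | 0 < x.2} = (univ : Set E) ×ˢ Ioi (0:ℝ) := by
    ext x; simp [Set.mem_prod]
  -- bound on the support
  obtain ⟨R, hR⟩ := hbd.subset_closedBall 0
  set B : ℝ := max R 0 + 1 with hB
  have hB0 : (0:ℝ) < B := by positivity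
  have huz : ∀ (x' : E) (τ : ℝ), B ≤ τ → u (x', τ) = 0 := by
    intro x' τ hτ
    by_contra h
    have hmem : ((x', τ) : E × ℝ) ∈ Function.support u := h
    have h1 : ‖((x', τ) : E × ℝ)‖ ≤ R := by
      simpa [dist_eq_norm] using hR hmem
    have h2 : |τ| ≤ ‖((x', τ) : E × ℝ)‖ := by
      simpa using norm_snd_le ((x', τ) : E × ℝ)
    have h3 : τ ≤ |τ| := le_abs_self τ
    have : max R 0 + 1 ≤ R := le_trans hτ (h3.trans (h2.trans h1))
    have : max R 0 + 1 ≤ max R 0 := this.trans (le_max_left R 0)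
    linarith
  -- integrability with respect to product measures
  have hprod : ∀ (f : E × ℝ → ℝ) (s : Set ℝ), IntegrableOn f ((univ : Set E) ×ˢ s) ↔
      Integrable f ((volume : Measure E).prod ((volume : Measure ℝ).restrict s)) := by
    intro f s
    rw [IntegrableOn, Measure.volume_eq_prod,
      ← Measure.prod_restrict, Measure.restrict_univ]
  have huN' : Integrable uN ((volume : Measure E).prod
      ((volume : Measure ℝ).restrict (Ioi 0))) := by
    rw [← hprod]
    exact hset ▸ huN
  have huN2 : Integrable uN ((volume : Measure E).prod
      ((volume : Measure ℝ).restrict (Ioc 0 B))) := by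
    rw [← hprod]
    refine (hset ▸ huN).mono_set ?_
    rintro ⟨x', τ⟩ ⟨-, hτ⟩
    exact ⟨trivial, hτ.1⟩
  have hae : ∀ᵐ x' : E, IntegrableOn (fun τ => uN (x', τ)) (Ioi (0:ℝ)) :=
    huN'.prod_right_ae
  -- key limit at the boundary for good slices
  have key : ∀ x' : E, IntegrableOn (fun τ => uN (x', τ)) (Ioi (0:ℝ)) →
      Tendsto (fun τ => u (x', τ)) (𝓝[>] (0:ℝ))
        (𝓝 (-∫ τ in (0:ℝ)..B, uN (x', τ))) := by
    intro x' hint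
    have hIcc : IntegrableOn (fun τ => uN (x', τ)) (Icc (0:ℝ) B) := by
      rw [integrableOn_Icc_iff_integrableOn_Ioc]
      exact hint.mono_set (fun t ht => ht.1)
    have hcont : ContinuousOn (fun a => ∫ t in a..B, uN (x', t)) (Icc (0:ℝ) B) := by
      have := intervalIntegral.continuousOn_primitive_interval_left
        (f := fun t => uN (x', t)) (a := (0:ℝ)) (b := B) (μ := volume)
        (by rwa [uIcc_of_le hB0.le])
      rwa [uIcc_of_le hB0.le] at this
    have h0 : Tendsto (fun a => ∫ t in a..B, uN (x', t)) (𝓝[Icc (0:ℝ) B] 0)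
        (𝓝 (∫ t in (0:ℝ)..B, uN (x', t))) :=
      hcont 0 (left_mem_Icc.2 hB0.le)
    have hfe : 𝓝[>] (0:ℝ) = 𝓝[Ioo (0:ℝ) B] 0 := by
      rw [← Set.Ioi_inter_Iio]
      exact (nhdsWithin_inter_of_mem'
        (mem_nhdsWithin_of_mem_nhds (Iio_mem_nhds hB0))).symm
    have h1 : Tendsto (fun a => ∫ t in a..B, uN (x', t)) (𝓝[>] (0:ℝ))
        (𝓝 (∫ t in (0:ℝ)..B, uN (x', t))) := by
      rw [hfe]
      exact h0.mono_left (nhdsWithin_mono 0 Ioo_subset_Icc_self)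
    have heq : ∀ᶠ a in 𝓝[>] (0:ℝ), u (x', a) = -∫ t in a..B, uN (x', t) := by
      filter_upwards [Ioo_mem_nhdsGT hB0] with a ha
      have hab : a ≤ B := ha.2.le
      have hFTC : ∫ t in a..B, uN (x', t) = u (x', B) - u (x', a) := by
        apply intervalIntegral.integral_eq_sub_of_hasDerivAt
          (f := fun τ => u (x', τ)) (f' := fun t => uN (x', t))
        · intro t ht
          rw [uIcc_of_le hab] at ht
          exact hderiv (x', t) (lt_of_lt_of_le ha.1 ht.1)
        · rw [intervalIntegrable_iff_integrableOn_Ioc_of_le hab]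
          exact hint.mono_set (fun t ht => lt_trans ha.1 ht.1)
      rw [hFTC, huz x' B le_rfl]
      ring
    exact Tendsto.congr' (heq.mono fun a h => h.symm) h1.neg
  refine ⟨?_, ?_, ?_⟩
  -- (1) agreement with boundary values for continuous functions
  · intro hc x'
    have htend1 : Tendsto (fun τ => ((x', τ) : E × ℝ)) (𝓝[>] (0:ℝ)) (𝓝 ((x', 0) : E × ℝ)) :=
      ((continuous_const.prodMk continuous_id).tendsto 0).mono_left nhdsWithin_le_nhds
    have hmemS : ∀ᶠ τ in 𝓝[>] (0:ℝ), ((x', τ) : E × ℝ) ∈ {x : E × ℝ | 0 < x.2} := by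
      filter_upwards [self_mem_nhdsWithin] with τ hτ
      exact hτ
    have hx0 : ((x', 0) : E × ℝ) ∈ closure {x : E × ℝ | 0 < x.2} :=
      mem_closure_of_tendsto htend1 hmemS
    have htend0 : Tendsto (fun τ => ((x', τ) : E × ℝ)) (𝓝[>] (0:ℝ))
        (𝓝[closure {x : E × ℝ | 0 < x.2}] ((x', 0) : E × ℝ)) := by
      apply tendsto_nhdsWithin_of_tendsto_nhds_of_eventually_within _ htend1
      filter_upwards [hmemS] with τ hτ
      exact subset_closure hτ
    have hcw : Tendsto u (𝓝[closure {x : E × ℝ | 0 < x.2}] ((x', 0) : E × ℝ))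
        (𝓝 (u (x', 0))) := hc ((x', 0) : E × ℝ) hx0
    exact hℓ (fun τ => u (x', τ)) (u (x', 0)) (hcw.comp htend0)
  -- common data for (2) and (3)
  · have haeT : (fun x' => ℓ (fun τ => u (x', τ))) =ᵐ[volume]
        (fun x' : E => -∫ τ in (0:ℝ)..B, uN (x', τ)) := by
      filter_upwards [hae] with x' hx'
      exact hℓ _ _ (key x' hx')
    have hInt : Integrable (fun x' : E => -∫ τ in (0:ℝ)..B, uN (x', τ)) := by
      have := huN2.integral_prod_left
      refine (this.neg).congr (Eventually.of_forall fun y => ?_)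
      show -∫ t, uN (y, t) ∂(volume.restrict (Ioc (0:ℝ) B)) = -∫ τ in (0:ℝ)..B, uN (y, τ)
      rw [intervalIntegral.integral_of_le hB0.le]
    exact hInt.congr haeT.symm
  · have haeT : (fun x' => ℓ (fun τ => u (x', τ))) =ᵐ[volume]
        (fun x' : E => -∫ τ in (0:ℝ)..B, uN (x', τ)) := by
      filter_upwards [hae] with x' hx'
      exact hℓ _ _ (key x' hx')
    have hg : Integrable (fun x' : E => ∫ τ in Ioi (0:ℝ), |uN (x', τ)|) := by
      have := huN'.integral_norm_prod_left
      simpa [Real.norm_eq_abs] using this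
    have hInt : Integrable (fun x' : E => -∫ τ in (0:ℝ)..B, uN (x', τ)) := by
      have := huN2.integral_prod_left
      refine (this.neg).congr (Eventually.of_forall fun y => ?_)
      show -∫ t, uN (y, t) ∂(volume.restrict (Ioc (0:ℝ) B)) = -∫ τ in (0:ℝ)..B, uN (y, τ)
      rw [intervalIntegral.integral_of_le hB0.le]
    have step1 : ∫ x', |ℓ (fun τ => u (x', τ))| =
        ∫ x' : E, |-∫ τ in (0:ℝ)..B, uN (x', τ)| := by
      apply integral_congr_ae
      filter_upwards [haeT] with x' hx'
      rw [hx']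
    have step2 : ∫ x' : E, |-∫ τ in (0:ℝ)..B, uN (x', τ)| ≤
        ∫ x' : E, ∫ τ in Ioi (0:ℝ), |uN (x', τ)| := by
      apply integral_mono_ae hInt.abs hg
      filter_upwards [hae] with x' hx'
      rw [abs_neg, intervalIntegral.integral_of_le hB0.le]
      calc |∫ τ in Ioc (0:ℝ) B, uN (x', τ)| ≤ ∫ τ in Ioc (0:ℝ) B, |uN (x', τ)| := by
            simpa [Real.norm_eq_abs] using
              norm_integral_le_integral_norm (μ := volume.restrict (Ioc (0:ℝ) B))
                (fun τ => uN (x', τ))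
        _ ≤ ∫ τ in Ioi (0:ℝ), |uN (x', τ)| := by
            apply setIntegral_mono_set hx'.abs
            · exact Eventually.of_forall fun τ => abs_nonneg _
            · exact HasSubset.Subset.eventuallyLE (fun t ht => ht.1)
    have step3 : ∫ x' : E, ∫ τ in Ioi (0:ℝ), |uN (x', τ)| =
        ∫ x in {x : E × ℝ | 0 < x.2}, |uN x| := by
      have h1 := MeasureTheory.integral_integral (μ := (volume : Measure E))
        (ν := (volume : Measure ℝ).restrict (Ioi 0))
        (f := fun x' τ => |uN (x', τ)|) huN'.abs
      rw [h1]
      rw [hset, Measure.volume_eq_prod, ← Measure.prod_restrict, Measure.restrict_univ]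
    rw [step1]
    exact step2.trans_eq step3
end
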